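/- arXiv:1512.05931 — 8 statements merged into one kernel-verified Lean document; each statement's English description precedes it below -/
import Mathlib

section
/- Let X be a real Banach space and let a, b : X → X be bounded linear operators such that I − a and I − b are bijective, and set α = (I − a)⁻¹, β = (I − b)⁻¹. Then α ∘ (I + a∘b) ∘ β = (1/2) α ∘ (I + a) ∘ (I + b) ∘ β + (1/2) I. -/
/-- Let `X` be a real Banach space, `a b : X → X` bounded linear
operators with `I - a` and `I - b` bijective, and `α = (I - a)⁻¹`, `β = (I - b)⁻¹`.
Then `α ∘ (I + a∘b) ∘ β = (1/2) α ∘ (I + a) ∘ (I + b) ∘ β + (1/2) I`. -/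
theorem douglas_rachford_stability_identity
    {X : Type*} [NormedAddCommGroup X] [NormedSpace ℝ X] [CompleteSpace X]
    (a b α β : X →L[ℝ] X)
    (hα₁ : α ∘L (1 - a) = 1) (hα₂ : (1 - a) ∘L α = 1)
    (hβ₁ : β ∘L (1 - b) = 1) (hβ₂ : (1 - b) ∘L β = 1) :
    α ∘L (1 + a ∘L b) ∘L β =
      (1 / 2 : ℝ) • (α ∘L (1 + a) ∘L (1 + b) ∘L β) + (1 / 2 : ℝ) • 1 := by
  have h2 : (1 + a ∘L b : X →L[ℝ] X) =
      (1/2 : ℝ) • ((1 + a) ∘L (1 + b)) + (1/2 : ℝ) • ((1 - a) ∘L (1 - b)) := by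
    ext x
    simp [ContinuousLinearMap.comp_apply, ContinuousLinearMap.add_apply,
      ContinuousLinearMap.sub_apply, map_add, map_sub, smul_add, smul_sub]
    module
  have hmid : α ∘L ((1 - a) ∘L (1 - b)) ∘L β = 1 := by
    calc α ∘L ((1 - a) ∘L (1 - b)) ∘L β
        = (α ∘L (1 - a)) ∘L ((1 - b) ∘L β) := by
          rw [ContinuousLinearMap.comp_assoc, ContinuousLinearMap.comp_assoc]
      _ = 1 := by rw [hα₁, hβ₂]; rfl
  rw [h2]
  simp only [ContinuousLinearMap.add_comp, ContinuousLinearMap.comp_add,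
    ContinuousLinearMap.smul_comp, ContinuousLinearMap.comp_smul, hmid]
  simp only [ContinuousLinearMap.one_def, ContinuousLinearMap.id_comp,
    ContinuousLinearMap.comp_id, ContinuousLinearMap.comp_assoc]
end

section
/- Let H be a real Hilbert space, k > 0, and let A, B : H → H be bounded dissipative linear operators. Let S = (I − kB)⁻¹ ∘ (I − kA)⁻¹ ∘ (I + k² A∘B) be the Douglas–Rachford operator. Then for every n ∈ ℕ the operator Sⁿ ∘ (I − kB)⁻¹ is nonexpansive, i.e. ‖Sⁿ((I − kB)⁻¹ v)‖ ≤ ‖v‖ for all v ∈ H. -/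
open scoped RealInnerProductSpace

/-- Let `H` be a real Hilbert space, `k > 0`, and `A, B` bounded
dissipative linear operators. With `α = (I - kA)⁻¹`, `β = (I - kB)⁻¹` and the
Douglas–Rachford operator `S = β ∘ α ∘ (I + k² A∘B)`, the operator `Sⁿ ∘ β` is
nonexpansive for every `n ∈ ℕ`. -/
theorem douglas_rachford_power_nonexpansive
    {H : Type*} [NormedAddCommGroup H] [InnerProductSpace ℝ H] [CompleteSpace H]
    (A B : H →L[ℝ] H)
    (hA : ∀ v : H, ⟪A v, v⟫ ≤ 0) (hB : ∀ v : H, ⟪B v, v⟫ ≤ 0)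
    (k : ℝ) (hk : 0 < k)
    (α β : H →L[ℝ] H)
    (hα₁ : α ∘L (1 - k • A) = 1) (hα₂ : (1 - k • A : H →L[ℝ] H) ∘L α = 1)
    (hβ₁ : β ∘L (1 - k • B) = 1) (hβ₂ : (1 - k • B : H →L[ℝ] H) ∘L β = 1)
    (S : H →L[ℝ] H) (hS : S = β ∘L α ∘L (1 + k ^ 2 • (A ∘L B))) :
    ∀ (n : ℕ) (v : H), ‖(S ^ n) (β v)‖ ≤ ‖v‖ := by
  -- pointwise Cayley inequalities
  have key : ∀ (C : H →L[ℝ] H), (∀ v : H, ⟪C v, v⟫ ≤ 0) →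
      ∀ v : H, ‖((1 + k • C : H →L[ℝ] H)) v‖ ≤ ‖((1 - k • C : H →L[ℝ] H)) v‖ := by
    intro C hC v
    have h1 : ((1 + k • C : H →L[ℝ] H)) v = v + k • C v := by
      simp
    have h2 : ((1 - k • C : H →L[ℝ] H)) v = v - k • C v := by
      simp
    rw [h1, h2, ← Real.sqrt_sq (norm_nonneg (v + k • C v)),
      ← Real.sqrt_sq (norm_nonneg (v - k • C v))]
    apply Real.sqrt_le_sqrt
    have e1 : ‖v + k • C v‖ ^ 2 = ‖v‖ ^ 2 + 2 * ⟪v, k • C v⟫ + ‖k • C v‖ ^ 2 :=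
      norm_add_sq_real v (k • C v)
    have e2 : ‖v - k • C v‖ ^ 2 = ‖v‖ ^ 2 - 2 * ⟪v, k • C v⟫ + ‖k • C v‖ ^ 2 :=
      norm_sub_sq_real v (k • C v)
    have hip : ⟪v, k • C v⟫ = k * ⟪C v, v⟫ := by
      rw [real_inner_smul_right, real_inner_comm]
    have := hC v
    nlinarith [this, hk.le]
  have keyg : ∀ (C : H →L[ℝ] H), (∀ v : H, ⟪C v, v⟫ ≤ 0) →
      ∀ v : H, ‖v‖ ≤ ‖((1 - k • C : H →L[ℝ] H)) v‖ := by
    intro C hC v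
    have h2 : ((1 - k • C : H →L[ℝ] H)) v = v - k • C v := by simp
    rw [h2, ← Real.sqrt_sq (norm_nonneg v), ← Real.sqrt_sq (norm_nonneg (v - k • C v))]
    apply Real.sqrt_le_sqrt
    have e2 : ‖v - k • C v‖ ^ 2 = ‖v‖ ^ 2 - 2 * ⟪v, k • C v⟫ + ‖k • C v‖ ^ 2 :=
      norm_sub_sq_real v (k • C v)
    have hip : ⟪v, k • C v⟫ = k * ⟪C v, v⟫ := by
      rw [real_inner_smul_right, real_inner_comm]
    nlinarith [hC v, hk.le, sq_nonneg ‖k • C v‖]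
  -- α, β nonexpansive
  have hαne : ∀ v : H, ‖α v‖ ≤ ‖v‖ := by
    intro v
    have := keyg A hA (α v)
    calc ‖α v‖ ≤ ‖((1 - k • A : H →L[ℝ] H)) (α v)‖ := this
      _ = ‖v‖ := by
        rw [← ContinuousLinearMap.comp_apply, hα₂]; rfl
  have hβne : ∀ v : H, ‖β v‖ ≤ ‖v‖ := by
    intro v
    have := keyg B hB (β v)
    calc ‖β v‖ ≤ ‖((1 - k • B : H →L[ℝ] H)) (β v)‖ := this
      _ = ‖v‖ := by
        rw [← ContinuousLinearMap.comp_apply, hβ₂]; rfl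
  -- commutation of α with (1 + k A)
  have hcomm : α ∘L (1 + k • A) = (1 + k • A : H →L[ℝ] H) ∘L α := by
    have e1 : (1 + k • A : H →L[ℝ] H) = 2 • (1 : H →L[ℝ] H) - (1 - k • A) := by
      ext v; simp [two_smul]
    rw [e1, ContinuousLinearMap.comp_sub, ContinuousLinearMap.sub_comp, hα₁, hα₂]
    congr 1
    ext v; simp [two_smul]
  -- the midpoint operator M
  set M : H →L[ℝ] H :=
    (2⁻¹ : ℝ) • (α ∘L (1 + k • A) ∘L ((1 + k • B) ∘L β) + 1) with hM
  have pα : ∀ w : H, α (w - k • A w) = w := by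
    intro w
    have := congrArg (fun T : H →L[ℝ] H => T w) hα₁
    simpa using this
  have pβ : ∀ v : H, β v - k • B (β v) = v := by
    intro v
    have := congrArg (fun T : H →L[ℝ] H => T v) hβ₂
    simpa using this
  have hSβ : S ∘L β = β ∘L M := by
    ext v
    simp only [hS, hM, ContinuousLinearMap.comp_apply, ContinuousLinearMap.add_apply,
      ContinuousLinearMap.smul_apply, ContinuousLinearMap.one_apply,
      ContinuousLinearMap.coe_smul', Pi.smul_apply]
    congr 1
    calc α (β v + k ^ 2 • (A ∘L B) (β v))
        = α ((2⁻¹ : ℝ) • (((β v + k • B (β v)) + k • A (β v + k • B (β v))) +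
            ((β v - k • B (β v)) - k • A (β v - k • B (β v))))) := by
          congr 1
          simp only [ContinuousLinearMap.comp_apply, map_add, map_sub, map_smul]
          module
      _ = (2⁻¹ : ℝ) • (α ((β v + k • B (β v)) + k • A (β v + k • B (β v))) +
            α ((β v - k • B (β v)) - k • A (β v - k • B (β v)))) := by
          rw [map_smul, map_add]
      _ = (2⁻¹ : ℝ) • (α ((1 + k • A : H →L[ℝ] H) (((1 + k • B : H →L[ℝ] H)) (β v))) + v) := by
          rw [pα, pβ]
          simp [ContinuousLinearMap.add_apply, ContinuousLinearMap.smul_apply]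
  -- M is pointwise nonexpansive
  have hMne : ∀ v : H, ‖M v‖ ≤ ‖v‖ := by
    intro v
    have happ : M v = (2⁻¹ : ℝ) • ((α ∘L (1 + k • A)) (((1 + k • B : H →L[ℝ] H)) (β v)) + v) := by
      simp [hM, ContinuousLinearMap.comp_apply]
      abel
    rw [happ]
    have h1 : ‖(α ∘L (1 + k • A)) (((1 + k • B : H →L[ℝ] H)) (β v))‖ ≤ ‖v‖ := by
      set u := ((1 + k • B : H →L[ℝ] H)) (β v) with hu
      have hu1 : ‖u‖ ≤ ‖v‖ := by
        calc ‖u‖ ≤ ‖((1 - k • B : H →L[ℝ] H)) (β v)‖ := key B hB (β v)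
          _ = ‖v‖ := by rw [← ContinuousLinearMap.comp_apply, hβ₂]; rfl
      calc ‖(α ∘L (1 + k • A)) u‖ = ‖((1 + k • A : H →L[ℝ] H)) (α u)‖ := by
            rw [hcomm]; rfl
        _ ≤ ‖((1 - k • A : H →L[ℝ] H)) (α u)‖ := key A hA (α u)
        _ = ‖u‖ := by rw [← ContinuousLinearMap.comp_apply, hα₂]; rfl
        _ ≤ ‖v‖ := hu1
    calc ‖(2⁻¹ : ℝ) • ((α ∘L (1 + k • A)) (((1 + k • B : H →L[ℝ] H)) (β v)) + v)‖
        = 2⁻¹ * ‖(α ∘L (1 + k • A)) (((1 + k • B : H →L[ℝ] H)) (β v)) + v‖ := by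
          rw [norm_smul]; norm_num
      _ ≤ 2⁻¹ * (‖(α ∘L (1 + k • A)) (((1 + k • B : H →L[ℝ] H)) (β v))‖ + ‖v‖) := by
          have := norm_add_le ((α ∘L (1 + k • A)) (((1 + k • B : H →L[ℝ] H)) (β v))) v
          linarith
      _ ≤ ‖v‖ := by linarith
  -- powers identity
  have hSn : ∀ n : ℕ, (S ^ n) ∘L β = β ∘L (M ^ n) := by
    intro n
    induction n with
    | zero => simp [ContinuousLinearMap.one_def]
    | succ n ih =>
      rw [pow_succ', pow_succ']
      calc (S * S ^ n) ∘L β = S ∘L ((S ^ n) ∘L β) := by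
            rw [ContinuousLinearMap.mul_def, ContinuousLinearMap.comp_assoc]
        _ = S ∘L (β ∘L (M ^ n)) := by rw [ih]
        _ = (S ∘L β) ∘L (M ^ n) := by rw [ContinuousLinearMap.comp_assoc]
        _ = (β ∘L M) ∘L (M ^ n) := by rw [hSβ]
        _ = β ∘L (M * M ^ n) := by
            rw [ContinuousLinearMap.comp_assoc, ContinuousLinearMap.mul_def]
  have hMn : ∀ (n : ℕ) (v : H), ‖(M ^ n) v‖ ≤ ‖v‖ := by
    intro n
    induction n with
    | zero => intro v; simp
    | succ n ih =>
      intro v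
      rw [pow_succ']
      calc ‖(M * M ^ n) v‖ = ‖M ((M ^ n) v)‖ := rfl
        _ ≤ ‖(M ^ n) v‖ := hMne _
        _ ≤ ‖v‖ := ih v
  intro n v
  have := congrArg (fun T : H →L[ℝ] H => T v) (hSn n)
  simp only [ContinuousLinearMap.comp_apply] at this
  rw [this]
  calc ‖β ((M ^ n) v)‖ ≤ ‖(M ^ n) v‖ := hβne _
    _ ≤ ‖v‖ := hMn n v
end

section
/- Let H be a real Hilbert space, k > 0, and let A, B : H → H be bounded dissipative linear operators such that L = A + B is bijective. Let S = (I − kB)⁻¹ ∘ (I − kA)⁻¹ ∘ (I + k² A∘B). Then for every η ∈ H: (I − kB)(exp(kL)η − Sη) = −(I − kA)⁻¹ (∫₀ᵏ τ · exp(τL)(L²η) dτ) + k² · A((I − kA)⁻¹(B(L⁻¹(∫₀ᵏ exp(τL)(L²η) dτ)))), where the integrals are Bochner integrals of the continuous H-valued integrands. -/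
open scoped RealInnerProductSpace

section DRaux
variable {H : Type*} [NormedAddCommGroup H] [InnerProductSpace ℝ H] [CompleteSpace H]

open NormedSpace intervalIntegral

private lemma DR_exp_apply_hasDerivAt (L : H →L[ℝ] H) (v : H) (t : ℝ) :
    HasDerivAt (fun τ : ℝ => (exp (τ • L)) v) ((exp (t • L)) (L v)) t := by
  have h := hasDerivAt_exp_smul_const (𝕂 := ℝ) L t
  have h2 := h.clm_apply (hasDerivAt_const t v)
  simpa using h2

private lemma DR_exp_apply_continuous (L : H →L[ℝ] H) (v : H) :
    Continuous (fun τ : ℝ => (exp (τ • L)) v) := by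
  have : Continuous (fun τ : ℝ => exp (τ • L)) :=
    continuous_iff_continuousAt.2 fun t => (hasDerivAt_exp_smul_const (𝕂 := ℝ) L t).continuousAt
  exact this.clm_apply continuous_const

omit [CompleteSpace H] in
private lemma DR_exp_comm (L : H →L[ℝ] H) (t : ℝ) (v : H) :
    (exp (t • L)) (L v) = L ((exp (t • L)) v) := by
  have hc : Commute (t • L) L := by
    unfold Commute SemiconjBy
    ext x
    simp [ContinuousLinearMap.mul_apply, map_smul]
  have h : Commute (exp (t • L)) L := hc.exp_left
  have := congrArg (fun T : H →L[ℝ] H => T v) h.eq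
  simpa using this

private lemma DR_exp_integral_eq (L : H →L[ℝ] H) (v : H) (k : ℝ) :
    (∫ τ in (0:ℝ)..k, (exp (τ • L)) (L v)) = (exp (k • L)) v - v := by
  have := integral_eq_sub_of_hasDerivAt (a := 0) (b := k)
    (f := fun τ : ℝ => (exp (τ • L)) v)
    (f' := fun τ : ℝ => (exp (τ • L)) (L v))
    (fun t _ => DR_exp_apply_hasDerivAt L v t)
    ((DR_exp_apply_continuous L (L v)).intervalIntegrable 0 k)
  simpa using this

private lemma DR_smul_integral_eq (L : H →L[ℝ] H) (v : H) (k : ℝ) :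
    (∫ τ in (0:ℝ)..k, τ • (exp (τ • L)) (L (L v))) =
      k • (exp (k • L)) (L v) - ((exp (k • L)) v - v) := by
  have hder : ∀ t : ℝ, HasDerivAt (fun τ : ℝ => τ • (exp (τ • L)) (L v))
      ((exp (t • L)) (L v) + t • (exp (t • L)) (L (L v))) t := by
    intro t
    have h := (hasDerivAt_id' t).smul (DR_exp_apply_hasDerivAt L (L v) t)
    simpa [add_comm, Pi.smul_def'] using h
  have hcont1 : Continuous (fun τ : ℝ => (exp (τ • L)) (L v)) :=
    DR_exp_apply_continuous L (L v)
  have hcont2 : Continuous (fun τ : ℝ => τ • (exp (τ • L)) (L (L v))) :=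
    continuous_id.smul (DR_exp_apply_continuous L (L (L v)))
  have hsum := integral_eq_sub_of_hasDerivAt (a := 0) (b := k)
    (f := fun τ : ℝ => τ • (exp (τ • L)) (L v))
    (f' := fun τ : ℝ => (exp (τ • L)) (L v) + τ • (exp (τ • L)) (L (L v)))
    (fun t _ => hder t)
    ((hcont1.add hcont2).intervalIntegrable 0 k)
  rw [intervalIntegral.integral_add (hcont1.intervalIntegrable 0 k)
    (hcont2.intervalIntegrable 0 k), DR_exp_integral_eq] at hsum
  simp only [zero_smul, sub_zero] at hsum
  linear_combination (norm := abel) hsum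

end DRaux

/-- The local (one-step) error representation of the
Douglas–Rachford splitting: with `L = A + B` bijective (inverse `Linv`),
`α = (I - kA)⁻¹`, `β = (I - kB)⁻¹` and `S = β ∘ α ∘ (I + k² A∘B)`, for every `η`:
`(I - kB)(exp(kL)η - Sη) = -α(∫₀ᵏ τ • exp(τL) L²η dτ)
 + k² • A(α(B(L⁻¹(∫₀ᵏ exp(τL) L²η dτ))))`. -/
theorem douglas_rachford_local_error_representation
    {H : Type*} [NormedAddCommGroup H] [InnerProductSpace ℝ H] [CompleteSpace H]
    (A B : H →L[ℝ] H)
    (hA : ∀ v : H, ⟪A v, v⟫ ≤ 0) (hB : ∀ v : H, ⟪B v, v⟫ ≤ 0)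
    (k : ℝ) (hk : 0 < k)
    (L : H →L[ℝ] H) (hL : L = A + B)
    (Linv : H →L[ℝ] H) (hLinv₁ : Linv ∘L L = 1) (hLinv₂ : L ∘L Linv = 1)
    (α β : H →L[ℝ] H)
    (hα₁ : α ∘L (1 - k • A) = 1) (hα₂ : (1 - k • A : H →L[ℝ] H) ∘L α = 1)
    (hβ₁ : β ∘L (1 - k • B) = 1) (hβ₂ : (1 - k • B : H →L[ℝ] H) ∘L β = 1)
    (S : H →L[ℝ] H) (hS : S = β ∘L α ∘L (1 + k ^ 2 • (A ∘L B)))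
    (η : H) :
    (1 - k • B : H →L[ℝ] H) ((NormedSpace.exp (k • L)) η - S η) =
      -(α (∫ τ in (0:ℝ)..k, τ • (NormedSpace.exp (τ • L)) (L (L η)))) +
        k ^ 2 •
          A (α (B (Linv (∫ τ in (0:ℝ)..k, (NormedSpace.exp (τ • L)) (L (L η)))))) := by
  set E := NormedSpace.exp (k • L) with hE
  -- the two integrals
  have hI2 : (∫ τ in (0:ℝ)..k, (NormedSpace.exp (τ • L)) (L (L η))) = E (L η) - L η :=
    DR_exp_integral_eq L (L η) k
  have hI1 : (∫ τ in (0:ℝ)..k, τ • (NormedSpace.exp (τ • L)) (L (L η))) =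
      k • E (L η) - (E η - η) := DR_smul_integral_eq L η k
  have hcomm : E (L η) = L (E η) := DR_exp_comm L k η
  -- Linv applied to I2
  have hLinvI2 : Linv (E (L η) - L η) = E η - η := by
    rw [hcomm, ← map_sub, ← ContinuousLinearMap.comp_apply, hLinv₁]
    rfl
  rw [hI2, hI1, hLinvI2, hcomm]
  -- injectivity of (1 - k•A)
  have hinj : ∀ x y : H, (1 - k • A : H →L[ℝ] H) x = (1 - k • A : H →L[ℝ] H) y → x = y := by
    intro x y h
    have hx := congrArg α h
    rw [← ContinuousLinearMap.comp_apply, ← ContinuousLinearMap.comp_apply, hα₁] at hx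
    exact hx
  apply hinj
  have hαap : ∀ x : H, (1 - k • A : H →L[ℝ] H) (α x) = x := by
    intro x
    rw [← ContinuousLinearMap.comp_apply, hα₂]
    rfl
  have hβap : ∀ x : H, (1 - k • B : H →L[ℝ] H) (β x) = x := by
    intro x
    rw [← ContinuousLinearMap.comp_apply, hβ₂]
    rfl
  have hSeta : (1 - k • B : H →L[ℝ] H) (S η) = α (η + k ^ 2 • A (B η)) := by
    rw [hS]
    simp only [ContinuousLinearMap.comp_apply, hβap, ContinuousLinearMap.add_apply,
      ContinuousLinearMap.one_apply, ContinuousLinearMap.smul_apply]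
  have hAα : ∀ x : H, (1 - k • A : H →L[ℝ] H) (A (α x)) = A x := by
    intro x
    have h1 : (1 - k • A : H →L[ℝ] H) (A (α x)) = A ((1 - k • A : H →L[ℝ] H) (α x)) := by
      simp only [ContinuousLinearMap.sub_apply, ContinuousLinearMap.smul_apply,
        ContinuousLinearMap.one_apply, map_sub, map_smul]
    rw [h1, hαap]
  rw [map_sub ((1 : H →L[ℝ] H) - k • B), hSeta]
  -- now expand everything
  have hLAB : ∀ v : H, L v = A v + B v := by
    intro v; rw [hL]; rfl
  simp only [map_add, map_sub, map_neg, map_smul, hAα, hαap, hLAB,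
    ContinuousLinearMap.sub_apply, ContinuousLinearMap.smul_apply,
    ContinuousLinearMap.one_apply, smul_sub, smul_add, map_neg]
  module
end

section
/- Let H be a real Hilbert space, k > 0, and let A, B : H → H be bounded dissipative linear operators such that L = A + B is bijective. Let S = (I − kB)⁻¹ ∘ (I − kA)⁻¹ ∘ (I + k² A∘B) be the Douglas–Rachford operator. Then for every n ∈ ℕ and every η ∈ H: ‖exp(nkL)η − Sⁿη‖ ≤ n k · k · (1/2 + 2‖B ∘ L⁻¹‖) · ‖L²η‖, where ‖B ∘ L⁻¹‖ is the operator norm. In particular the Douglas–Rachford splitting is first-order convergent in k, uniformly on bounded time intervals nk ≤ T. -/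
open scoped RealInnerProductSpace

set_option synthInstance.maxHeartbeats 1000000
set_option maxHeartbeats 1000000
set_option linter.unusedSectionVars false

section DRAux

variable {H : Type*} [NormedAddCommGroup H] [InnerProductSpace ℝ H] [CompleteSpace H]

/-- Resolvent of a dissipative operator is a contraction. -/
lemma dr_resolvent_contraction (T R : H →L[ℝ] H) (hT : ∀ v : H, ⟪T v, v⟫ ≤ 0)
    {s : ℝ} (hs : 0 ≤ s) (hR : (1 - s • T) * R = 1) (x : H) : ‖R x‖ ≤ ‖x‖ := by
  set y := R x with hy
  have hx : y - s • T y = x := by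
    have h := congrArg (fun f : H →L[ℝ] H => f x) hR
    simpa [ContinuousLinearMap.mul_apply, ContinuousLinearMap.sub_apply,
      ContinuousLinearMap.smul_apply] using h
  have h1 : ‖x‖^2 = ‖y‖^2 - 2 * ⟪y, s • T y⟫ + ‖s • T y‖^2 := by
    rw [← hx, norm_sub_sq_real]
  have h2 : ⟪y, s • T y⟫ = s * ⟪T y, y⟫ := by
    rw [real_inner_smul_right, real_inner_comm]
  nlinarith [norm_nonneg y, norm_nonneg x, norm_nonneg (s • T y), sq_nonneg (‖s • T y‖),
    mul_nonneg hs (neg_nonneg.mpr (hT y))]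

/-- Reflected resolvent of a dissipative operator is nonexpansive. -/
lemma dr_reflection_nonexpansive (T R : H →L[ℝ] H) (hT : ∀ v : H, ⟪T v, v⟫ ≤ 0)
    {s : ℝ} (hs : 0 ≤ s) (hR : (1 - s • T) * R = 1) (x : H) :
    ‖(2:ℝ) • R x - x‖ ≤ ‖x‖ := by
  set y := R x with hy
  have hx : y - s • T y = x := by
    have h := congrArg (fun f : H →L[ℝ] H => f x) hR
    simpa [ContinuousLinearMap.mul_apply, ContinuousLinearMap.sub_apply,
      ContinuousLinearMap.smul_apply] using h
  have h0 : (2:ℝ) • y - x = y + s • T y := by rw [← hx]; module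
  have h1 : ‖x‖^2 = ‖y‖^2 - 2 * ⟪y, s • T y⟫ + ‖s • T y‖^2 := by
    rw [← hx, norm_sub_sq_real]
  have h1' : ‖y + s • T y‖^2 = ‖y‖^2 + 2 * ⟪y, s • T y⟫ + ‖s • T y‖^2 := by
    rw [norm_add_sq_real]
  have h2 : ⟪y, s • T y⟫ = s * ⟪T y, y⟫ := by
    rw [real_inner_smul_right, real_inner_comm]
  rw [h0]
  nlinarith [norm_nonneg x, norm_nonneg (y + s • T y),
    mul_nonneg hs (neg_nonneg.mpr (hT y))]

/-- The resolvent family: `1 - s•A` is invertible for all `s ≥ 0` when `A` is dissipative. -/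
lemma dr_isUnit (A : H →L[ℝ] H) (hA : ∀ v : H, ⟪A v, v⟫ ≤ 0) :
    ∀ s : ℝ, 0 ≤ s → IsUnit (1 - s • A) := by
  set δ : ℝ := (2 * (‖A‖ + 1))⁻¹ with hδdef
  have hApos : (0:ℝ) < ‖A‖ + 1 := by positivity
  have hδ : 0 < δ := by positivity
  have key : ∀ n : ℕ, ∀ s : ℝ, 0 ≤ s → s ≤ n * δ → IsUnit (1 - s • A) := by
    intro n
    induction n with
    | zero =>
      intro s hs hs'
      simp only [Nat.cast_zero, zero_mul] at hs'
      have : s = 0 := le_antisymm hs' hs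
      simp [this]
    | succ n ih =>
      intro s hs hs'
      by_cases hc : s ≤ n * δ
      · exact ih s hs hc
      · push_neg at hc
        have hnd : (0:ℝ) ≤ n * δ := by positivity
        obtain ⟨u, hu⟩ := ih (n * δ) hnd le_rfl
        have huinv : (1 - (n * δ) • A) * ↑u⁻¹ = 1 := by rw [← hu]; exact u.mul_inv
        have hinv_norm : ‖(↑u⁻¹ : H →L[ℝ] H)‖ ≤ 1 := by
          refine ContinuousLinearMap.opNorm_le_bound _ zero_le_one fun x => ?_
          rw [one_mul]
          exact dr_resolvent_contraction A _ hA hnd huinv x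
        set t : ℝ := s - n * δ with htdef
        have ht : 0 ≤ t := by simp [htdef]; linarith
        have ht' : t ≤ δ := by
          have : (↑(n+1) : ℝ) * δ = n * δ + δ := by push_cast; ring
          simp only [htdef]; rw [this] at hs'; linarith
        have hnorm : ‖t • ((↑u⁻¹ : H →L[ℝ] H) * A)‖ < 1 := by
          have h1 : ‖t • ((↑u⁻¹ : H →L[ℝ] H) * A)‖ ≤ t * (1 * ‖A‖) := by
            rw [norm_smul t ((↑u⁻¹ : H →L[ℝ] H) * A), Real.norm_of_nonneg ht]
            exact mul_le_mul_of_nonneg_left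
              (le_trans (norm_mul_le _ _)
                (mul_le_mul_of_nonneg_right hinv_norm (norm_nonneg A))) ht
          have h2 : t * (1 * ‖A‖) ≤ δ * ‖A‖ := by
            rw [one_mul]; exact mul_le_mul_of_nonneg_right ht' (norm_nonneg A)
          have h3 : δ * ‖A‖ < 1 := by
            rw [hδdef]
            rw [inv_mul_lt_iff₀ (by positivity)]
            nlinarith [norm_nonneg A]
          exact lt_of_le_of_lt (h1.trans h2) h3
        have hval : (↑(u * Units.oneSub (t • ((↑u⁻¹ : H →L[ℝ] H) * A)) hnorm) : H →L[ℝ] H)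
            = 1 - s • A := by
          have : (↑(Units.oneSub (t • ((↑u⁻¹ : H →L[ℝ] H) * A)) hnorm) : H →L[ℝ] H)
              = 1 - t • (↑u⁻¹ * A) := rfl
          rw [Units.val_mul, this, hu, mul_sub, mul_one, mul_smul_comm, ← mul_assoc]
          have : ((1 : H →L[ℝ] H) - (n * δ) • A) * ↑u⁻¹ = 1 := huinv
          rw [this, one_mul]
          have hts : (n * δ) • A + t • A = s • A := by
            rw [← add_smul]; congr 1; simp [htdef]
          rw [sub_sub, hts]
        exact ⟨_, hval⟩
  intro s hs
  exact key ⌈s / δ⌉₊ s hs (by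
    have h1 : s / δ ≤ ↑⌈s / δ⌉₊ := Nat.le_ceil _
    calc s = (s / δ) * δ := by field_simp
    _ ≤ ↑⌈s / δ⌉₊ * δ := mul_le_mul_of_nonneg_right h1 hδ.le)

/-- Pointwise derivative of the operator exponential. -/
lemma dr_exp_deriv (L : H →L[ℝ] H) (v : H) (t : ℝ) :
    HasDerivAt (fun u : ℝ => NormedSpace.exp (u • L) v) (NormedSpace.exp (t • L) (L v)) t := by
  have h := hasDerivAt_exp_smul_const (𝕂 := ℝ) L t
  have h2 := ((ContinuousLinearMap.apply ℝ H v).hasFDerivAt.comp_hasDerivAt t h)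
  simpa [ContinuousLinearMap.apply, ContinuousLinearMap.mul_apply, Function.comp_def] using h2

/-- `L` commutes with `exp(t•L)`. -/
lemma dr_exp_comm (L : H →L[ℝ] H) (t : ℝ) (x : H) :
    L (NormedSpace.exp (t • L) x) = NormedSpace.exp (t • L) (L x) := by
  have hc : Commute (t • L) L := by
    refine ContinuousLinearMap.ext fun y => ?_
    simp [ContinuousLinearMap.mul_apply, map_smul]
  have h : Commute (NormedSpace.exp (t • L)) L := hc.exp_left
  have := congrArg (fun f : H →L[ℝ] H => f x) h.eq
  simpa [ContinuousLinearMap.mul_apply] using this.symm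

/-- The semigroup generated by a dissipative operator is contractive. -/
lemma dr_exp_contraction (L : H →L[ℝ] H) (hL : ∀ v : H, ⟪L v, v⟫ ≤ 0)
    {t : ℝ} (ht : 0 ≤ t) (v : H) : ‖NormedSpace.exp (t • L) v‖ ≤ ‖v‖ := by
  set f : ℝ → H := fun u => NormedSpace.exp (u • L) v with hf
  set g : ℝ → ℝ := fun u => ⟪f u, f u⟫ with hg
  have hfd : ∀ u : ℝ, HasDerivAt f (NormedSpace.exp (u • L) (L v)) u :=
    fun u => dr_exp_deriv L v u
  have hgd : ∀ u : ℝ, HasDerivAt g (2 * ⟪L (f u), f u⟫) u := by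
    intro u
    have h1 := (hfd u).inner ℝ (hfd u)
    have h2 : NormedSpace.exp (u • L) (L v) = L (f u) := (dr_exp_comm L u v).symm
    rw [h2] at h1
    refine h1.congr_deriv ?_
    rw [real_inner_comm (f u) (L (f u))]; ring
  have hmono : AntitoneOn g (Set.Icc 0 t) := by
    apply antitoneOn_of_deriv_nonpos (convex_Icc 0 t)
    · exact fun u _ => ((hgd u).continuousAt).continuousWithinAt
    · exact fun u _ => ((hgd u).differentiableAt).differentiableWithinAt
    · intro u _
      rw [(hgd u).deriv]
      have := hL (f u)
      nlinarith
  have hft : g t ≤ g 0 := by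
    rcases eq_or_lt_of_le ht with h | h
    · rw [← h]
    · exact hmono (Set.left_mem_Icc.mpr ht) (Set.mem_Icc.mpr ⟨ht, le_rfl⟩) ht
  have hg0 : g 0 = ‖v‖^2 := by
    simp only [hg, hf, zero_smul, NormedSpace.exp_zero, ContinuousLinearMap.one_apply]
    exact real_inner_self_eq_norm_sq v
  have hgt : g t = ‖f t‖^2 := real_inner_self_eq_norm_sq (f t)
  rw [hgt, hg0] at hft
  nlinarith [norm_nonneg (f t), norm_nonneg v]

/-- Taylor bound: `‖exp(t•L)w − w‖ ≤ t‖Lw‖` for dissipative `L`, `t ≥ 0`. -/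
lemma dr_exp_sub_one (L : H →L[ℝ] H) (hL : ∀ v : H, ⟪L v, v⟫ ≤ 0)
    {t : ℝ} (ht : 0 ≤ t) (w : H) :
    ‖NormedSpace.exp (t • L) w - w‖ ≤ t * ‖L w‖ := by
  have key := norm_image_sub_le_of_norm_deriv_le_segment'
    (f := fun u : ℝ => NormedSpace.exp (u • L) w)
    (f' := fun u : ℝ => NormedSpace.exp (u • L) (L w))
    (a := 0) (b := t) (C := ‖L w‖)
    (fun u _ => (dr_exp_deriv L w u).hasDerivWithinAt)
    (fun u hu => dr_exp_contraction L hL hu.1 (L w))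
    t (Set.mem_Icc.mpr ⟨ht, le_rfl⟩)
  rw [mul_comm]
  simpa [zero_smul, NormedSpace.exp_zero] using key

/-- Sharp local error bound for the resolvent step against the exponential. -/
lemma dr_local_error (A B L Linv α : H →L[ℝ] H)
    (hA : ∀ v : H, ⟪A v, v⟫ ≤ 0)
    (hLd : ∀ v : H, ⟪L v, v⟫ ≤ 0)
    {k : ℝ} (hk : 0 < k) (hL : L = A + B)
    (hLinv₁ : Linv * L = 1) (hLinv₂ : L * Linv = 1)
    (hα₁ : α * (1 - k • A) = 1) (hα₂ : (1 - k • A) * α = 1)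
    (ξ : H) :
    ‖NormedSpace.exp (k • L) ξ - ξ - k • α (L ξ)‖ ≤
      k ^ 2 * (1 / 2 + ‖B ∘L Linv‖) * ‖L (L ξ)‖ := by
  set M : H →L[ℝ] H := B ∘L Linv with hM
  set c : ℝ := ‖M‖ with hc
  set N : ℝ := ‖L (L ξ)‖ with hN
  have hc0 : 0 ≤ c := norm_nonneg _
  have hN0 : 0 ≤ N := norm_nonneg _
  -- pointwise: A z = L z - M (L z)
  have hAop : ∀ z : H, A z = L z - M (L z) := by
    have h3 : (L - B) * Linv = 1 - M := by
      rw [sub_mul, hLinv₂]; rfl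
    have h4 : L - B = A := by rw [hL]; exact add_sub_cancel_right A B
    have h1 : A = (1 - M) * L := by
      calc A = A * 1 := (mul_one A).symm
        _ = A * (Linv * L) := by rw [hLinv₁]
        _ = (A * Linv) * L := by rw [mul_assoc]
        _ = ((L - B) * Linv) * L := by rw [h4]
        _ = (1 - M) * L := by rw [h3]
    intro z
    rw [h1]
    simp [ContinuousLinearMap.mul_apply, ContinuousLinearMap.sub_apply]
  -- the resolvent family
  have hRunit : ∀ s : ℝ, 0 ≤ s → IsUnit (1 - s • A) := dr_isUnit A hA
  set R : ℝ → H →L[ℝ] H := fun s => Ring.inverse (1 - s • A) with hRdef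
  have hRl : ∀ {s : ℝ}, 0 ≤ s → R s * (1 - s • A) = 1 :=
    fun {s} hs => Ring.inverse_mul_cancel _ (hRunit s hs)
  have hRr : ∀ {s : ℝ}, 0 ≤ s → (1 - s • A) * R s = 1 :=
    fun {s} hs => Ring.mul_inverse_cancel _ (hRunit s hs)
  have hRcon : ∀ {s : ℝ}, 0 ≤ s → ∀ x : H, ‖R s x‖ ≤ ‖x‖ :=
    fun {s} hs x => dr_resolvent_contraction A (R s) hA hs (hRr hs) x
  -- paths
  set w : ℝ → H →L[ℝ] H := fun s => NormedSpace.exp ((k - s) • L) with hwdef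
  set u : ℝ → H := fun s => w s ξ - ξ + s • L ξ with hudef
  set u' : ℝ → H := fun s => L ξ - w s (L ξ) with hu'def
  set V : ℝ → H := fun s => A (u s) + u' s - s • A (u' s) with hVdef
  set F : ℝ → H := fun s => R s (u s) with hFdef
  set φ : ℝ → H := fun s => R s (R s (V s)) with hφdef
  -- derivative of F
  have hderiv : ∀ s ∈ Set.uIcc (0:ℝ) k, HasDerivAt F (φ s) s := by
    intro s hs
    rw [Set.uIcc_of_le hk.le] at hs
    obtain ⟨hs0, hsk⟩ := hs
    obtain ⟨U, hU⟩ := hRunit s hs0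
    have hUinv : (↑U⁻¹ : H →L[ℝ] H) = R s := by
      rw [hRdef]; simp only [← hU, Ring.inverse_unit]
    -- derivative of R
    have hp : HasDerivAt (fun y : ℝ => 1 - y • A) (-A) s := by
      have h1 : HasDerivAt (fun y : ℝ => y • A) ((1:ℝ) • A) s :=
        HasDerivAt.smul_const (𝕜' := ℝ) (hasDerivAt_id s) A
      have h2 := h1.const_sub 1
      rw [one_smul] at h2
      exact h2
    have hinv : HasFDerivAt Ring.inverse
        (-(ContinuousLinearMap.mulLeftRight ℝ (H →L[ℝ] H) ↑U⁻¹ ↑U⁻¹)) (1 - s • A) := by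
      rw [← hU]; exact hasFDerivAt_ringInverse U
    have hRd : HasDerivAt R (R s * A * R s) s := by
      have h2 := hinv.comp_hasDerivAt s hp
      have h3 : (-(ContinuousLinearMap.mulLeftRight ℝ (H →L[ℝ] H) ↑U⁻¹ ↑U⁻¹)) (-A)
          = R s * A * R s := by
        simp [ContinuousLinearMap.mulLeftRight_apply, hUinv]
      rw [← h3]
      exact h2
    -- derivative of u
    have hwd : HasDerivAt (fun y : ℝ => w y ξ)
        (-(w s (L ξ))) s := by
      have h3 := dr_exp_deriv L ξ (k - s)
      have h4 : HasDerivAt (fun y : ℝ => k - y) (-1 : ℝ) s := by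
        simpa using (hasDerivAt_id s).const_sub k
      have h5 : HasDerivAt ((fun t : ℝ => NormedSpace.exp (t • L) ξ) ∘ fun y : ℝ => k - y)
          ((-1 : ℝ) • NormedSpace.exp ((k - s) • L) (L ξ)) s :=
        HasDerivAt.scomp (𝕜 := ℝ) (𝕜' := ℝ) (x := s) h3 h4
      simpa [hwdef, Function.comp_def] using h5
    have hud : HasDerivAt u (u' s) s := by
      have h6 := (hwd.sub_const ξ).add ((hasDerivAt_id s).smul_const (L ξ))
      have h7 : -(w s (L ξ)) + (1:ℝ) • L ξ = u' s := by
        simp [hu'def]; abel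
      rw [← h7]
      exact h6
    -- combine
    have hFd := hRd.clm_apply hud
    -- commutation of A with R s
    have hCA : Commute A (1 - s • A) := by
      refine ContinuousLinearMap.ext fun y => ?_
      simp [ContinuousLinearMap.mul_apply, ContinuousLinearMap.sub_apply,
        ContinuousLinearMap.smul_apply, map_sub, map_smul]
    have hCAr : Commute A (R s) := by
      rw [← hUinv]
      exact (show Commute A (↑U) by rw [hU]; exact hCA).units_inv_right
    have heq : (R s * A * R s) (u s) + R s (u' s) = φ s := by
      have e1 : (R s * A * R s) (u s) = R s (R s (A (u s))) := by
        have : R s * A * R s = R s * (R s * A) := by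
          rw [mul_assoc, hCAr.eq]
        rw [this]; rfl
      have e2 : R s (u' s) = R s (R s (u' s - s • A (u' s))) := by
        have h8 : (1 - s • A) (u' s) = u' s - s • A (u' s) := by
          simp [ContinuousLinearMap.sub_apply, ContinuousLinearMap.smul_apply]
        have h9 : R s ((1 - s • A) (u' s)) = u' s := by
          have := congrArg (fun f : H →L[ℝ] H => f (u' s)) (hRl hs0)
          simpa [ContinuousLinearMap.mul_apply] using this
        rw [← h8, h9]
      rw [e1, e2, hφdef]
      simp only [hVdef]
      rw [← map_add, ← map_add]
      congr 2
      abel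
    rw [← heq]
    exact hFd
  -- continuity of φ
  have hwcont : ∀ z : H, Continuous (fun s : ℝ => w s z) := by
    intro z
    have h1 : Continuous (fun s : ℝ => (k - s) • L) :=
      (continuous_const.sub continuous_id).smul continuous_const
    have h2 : Continuous (fun s : ℝ => NormedSpace.exp ((k - s) • L)) :=
      (continuous_iff_continuousAt.2 fun x => (NormedSpace.exp_analytic (𝕂 := ℝ) x).continuousAt).comp h1
    exact ((ContinuousLinearMap.apply ℝ H z).continuous.comp h2)
  have hRcont : ContinuousOn R (Set.uIcc 0 k) := by
    rw [Set.uIcc_of_le hk.le]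
    intro s hs
    obtain ⟨U, hU⟩ := hRunit s hs.1
    have h1 : ContinuousAt Ring.inverse ((1 : H →L[ℝ] H) - s • A) := by
      rw [← hU]; exact NormedRing.inverse_continuousAt U
    have h2 : Continuous (fun y : ℝ => (1 : H →L[ℝ] H) - y • A) :=
      continuous_const.sub (continuous_id.smul continuous_const)
    have h5 : ContinuousWithinAt (fun y : ℝ => (1 : H →L[ℝ] H) - y • A) (Set.Icc 0 k) s :=
      h2.continuousWithinAt
    have h6 : ContinuousWithinAt (Ring.inverse ∘ fun y : ℝ => (1 : H →L[ℝ] H) - y • A)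
        (Set.Icc 0 k) s := ContinuousAt.comp_continuousWithinAt (x := s) h1 h5
    exact h6
  have hVcont : Continuous V := by
    have hu_cont : Continuous u := by
      simp only [hudef]
      exact ((hwcont ξ).sub continuous_const).add (continuous_id.smul continuous_const)
    have hu'_cont : Continuous u' := continuous_const.sub (hwcont (L ξ))
    simp only [hVdef]
    exact ((A.continuous.comp hu_cont).add hu'_cont).sub
      (continuous_id.smul (A.continuous.comp hu'_cont))
  have hφcont : ContinuousOn φ (Set.uIcc 0 k) :=
    hRcont.clm_apply (hRcont.clm_apply hVcont.continuousOn)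
  -- FTC
  have hφcont' : ContinuousOn φ (Set.Icc 0 k) := by
    rwa [Set.uIcc_of_le hk.le] at hφcont
  have hFTC : ∫ s in (0:ℝ)..k, φ s = F k - F 0 :=
    intervalIntegral.integral_eq_sub_of_hasDerivAt hderiv
      (ContinuousOn.intervalIntegrable_of_Icc hk.le hφcont')
  -- endpoints
  have hF0 : F 0 = NormedSpace.exp (k • L) ξ - ξ := by
    simp [hFdef, hudef, hwdef, hRdef, Ring.inverse_one]
  have hFk : F k = k • α (L ξ) := by
    have hRk : R k = α := by
      rw [hRdef]
      exact Ring.inverse_unit ⟨1 - k • A, α, hα₂, hα₁⟩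
    have huk : u k = k • L ξ := by
      simp [hudef, hwdef]
    rw [hFdef]
    show R k (u k) = k • α (L ξ)
    rw [hRk, huk, map_smul]
  -- pointwise bound on φ
  have hb : ∀ s ∈ Set.Ioc (0:ℝ) k, ‖φ s‖ ≤ (c * k + s) * N := by
    intro s hs
    have hs0 : (0:ℝ) ≤ s := hs.1.le
    have hsk : s ≤ k := hs.2
    have hks : (0:ℝ) ≤ k - s := by linarith
    have h1 : ‖φ s‖ ≤ ‖V s‖ := (hRcon hs0 _).trans (hRcon hs0 _)
    have e1 : L (w s ξ) = w s (L ξ) := dr_exp_comm L (k - s) ξ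
    have e2 : L (w s (L ξ)) = w s (L (L ξ)) := dr_exp_comm L (k - s) (L ξ)
    have hLu : L (u s) = w s (L ξ) - L ξ + s • L (L ξ) := by
      simp [hudef, map_sub, map_add, map_smul, e1]
    have hLu' : L (u' s) = L (L ξ) - w s (L (L ξ)) := by
      simp [hu'def, map_sub, e2]
    have hVeq : V s = s • w s (L (L ξ)) - M (w s (L ξ) - L ξ) - s • M (w s (L (L ξ))) := by
      rw [hVdef]
      show A (u s) + u' s - s • A (u' s) = _
      rw [hAop (u s), hAop (u' s), hLu, hLu']
      show w s (L ξ) - L ξ + s • L (L ξ) - M (w s (L ξ) - L ξ + s • L (L ξ)) +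
        (L ξ - w s (L ξ)) - s • (L (L ξ) - w s (L (L ξ)) - M (L (L ξ) - w s (L (L ξ)))) = _
      simp only [map_add, map_sub, map_smul, smul_sub]
      abel
    have hb1 : ‖M (w s (L ξ) - L ξ)‖ ≤ c * ((k - s) * N) := by
      refine (M.le_opNorm _).trans ?_
      refine mul_le_mul_of_nonneg_left ?_ hc0
      exact dr_exp_sub_one L hLd hks (L ξ)
    have hb2 : ‖w s (L (L ξ))‖ ≤ N := dr_exp_contraction L hLd hks (L (L ξ))
    have hb3 : ‖M (w s (L (L ξ)))‖ ≤ c * N :=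
      (M.le_opNorm _).trans (mul_le_mul_of_nonneg_left hb2 hc0)
    have h2 : ‖V s‖ ≤ s * N + c * ((k - s) * N) + s * (c * N) := by
      rw [hVeq]
      refine (norm_sub_le _ _).trans ?_
      refine add_le_add (norm_sub_le _ _|>.trans (add_le_add ?_ hb1)) ?_
      · rw [norm_smul, Real.norm_of_nonneg hs0]
        exact mul_le_mul_of_nonneg_left hb2 hs0
      · rw [norm_smul, Real.norm_of_nonneg hs0]
        exact mul_le_mul_of_nonneg_left hb3 hs0
    refine h1.trans (h2.trans ?_)
    nlinarith [mul_nonneg hc0 hN0, mul_nonneg hs0 hN0]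
  -- integral of the bound
  have hInt : ∫ s in (0:ℝ)..k, ((c * k + s) * N) = (c * k * k + k ^ 2 / 2) * N := by
    rw [intervalIntegral.integral_mul_const]
    have : ∫ s in (0:ℝ)..k, (c * k + s) = c * k * k + k ^ 2 / 2 := by
      rw [intervalIntegral.integral_add intervalIntegrable_const intervalIntegral.intervalIntegrable_id,
        intervalIntegral.integral_const, integral_id]
      simp
      ring
    rw [this]
  have h9 : ‖∫ s in (0:ℝ)..k, φ s‖ ≤ |(c * k * k + k ^ 2 / 2) * N| := by
    rw [← hInt]
    refine (intervalIntegral.norm_integral_le_of_norm_le hk.le ?_ ?_).trans (le_abs_self _)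
    · exact Filter.Eventually.of_forall fun s hs => hb s hs
    · exact ((continuous_const.add continuous_id).mul continuous_const).intervalIntegrable _ _
  calc ‖NormedSpace.exp (k • L) ξ - ξ - k • α (L ξ)‖ = ‖F 0 - F k‖ := by
        rw [hF0, hFk]
    _ = ‖F k - F 0‖ := norm_sub_rev _ _
    _ = ‖∫ s in (0:ℝ)..k, φ s‖ := by rw [hFTC]
    _ ≤ |(c * k * k + k ^ 2 / 2) * N| := h9
    _ = (c * k * k + k ^ 2 / 2) * N := abs_of_nonneg (by positivity)
    _ = k ^ 2 * (1 / 2 + c) * N := by ring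

end DRAux

/-- First-order temporal convergence of the Douglas–Rachford
splitting (bounded-operator form of Lemma 4.1): with `L = A + B` bijective
(inverse `Linv`), `α = (I - kA)⁻¹`, `β = (I - kB)⁻¹` and
`S = β ∘ α ∘ (I + k² A∘B)`, for every `n` and `η`:
`‖exp(nkL)η - Sⁿη‖ ≤ n k · k · (1/2 + 2‖B ∘ L⁻¹‖) · ‖L²η‖`. -/
theorem douglas_rachford_first_order_convergence
    {H : Type*} [NormedAddCommGroup H] [InnerProductSpace ℝ H] [CompleteSpace H]
    (A B : H →L[ℝ] H)
    (hA : ∀ v : H, ⟪A v, v⟫ ≤ 0) (hB : ∀ v : H, ⟪B v, v⟫ ≤ 0)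
    (k : ℝ) (hk : 0 < k)
    (L : H →L[ℝ] H) (hL : L = A + B)
    (Linv : H →L[ℝ] H) (hLinv₁ : Linv ∘L L = 1) (hLinv₂ : L ∘L Linv = 1)
    (α β : H →L[ℝ] H)
    (hα₁ : α ∘L (1 - k • A) = 1) (hα₂ : (1 - k • A : H →L[ℝ] H) ∘L α = 1)
    (hβ₁ : β ∘L (1 - k • B) = 1) (hβ₂ : (1 - k • B : H →L[ℝ] H) ∘L β = 1)
    (S : H →L[ℝ] H) (hS : S = β ∘L α ∘L (1 + k ^ 2 • (A ∘L B)))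
    (n : ℕ) (η : H) :
    ‖(NormedSpace.exp ((n * k) • L)) η - (S ^ n) η‖ ≤
      (n * k) * k * (1 / 2 + 2 * ‖B ∘L Linv‖) * ‖L (L η)‖ := by
  -- multiplicative forms of the hypotheses
  have hLinv₁' : Linv * L = 1 := hLinv₁
  have hLinv₂' : L * Linv = 1 := hLinv₂
  have hα₁' : α * (1 - k • A) = 1 := hα₁
  have hα₂' : (1 - k • A) * α = 1 := hα₂
  have hβ₁' : β * (1 - k • B) = 1 := hβ₁
  have hβ₂' : (1 - k • B) * β = 1 := hβ₂
  have hS' : S = β * (α * (1 + k ^ 2 • (A * B))) := hS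
  set c : ℝ := ‖B ∘L Linv‖ with hcdef
  have hc0 : (0:ℝ) ≤ c := norm_nonneg _
  set C : ℝ := 1 / 2 + 2 * c with hCdef
  have hC0 : (0:ℝ) ≤ C := by rw [hCdef]; linarith
  have hLd : ∀ v : H, ⟪L v, v⟫ ≤ 0 := by
    intro v
    rw [hL]
    have h1 := hA v
    have h2 := hB v
    rw [ContinuousLinearMap.add_apply, inner_add_left]
    linarith
  have hβcon : ∀ x : H, ‖β x‖ ≤ ‖x‖ :=
    fun x => dr_resolvent_contraction B β hB hk.le hβ₂' x
  -- `B z = (B∘Linv) (L z)`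
  have hBop : ∀ z : H, B z = (B ∘L Linv) (L z) := by
    intro z
    have h1 : B = (B ∘L Linv) * L := by
      calc B = B * 1 := (mul_one B).symm
        _ = B * (Linv * L) := by rw [hLinv₁']
        _ = (B * Linv) * L := by rw [mul_assoc]
        _ = (B ∘L Linv) * L := rfl
    conv_lhs => rw [h1]
    rfl
  -- the key algebraic identity
  have hmain : (1 - k • A) * (1 + k • (α * L) - k • B) = 1 + k ^ 2 • (A * B) := by
    have e1 : (1 - k • A) * (k • (α * L)) = k • L := by
      rw [mul_smul_comm, ← mul_assoc, hα₂', one_mul]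
    have e2 : (1 - k • A) * (k • B) = k • B - (k * k) • (A * B) := by
      rw [mul_smul_comm, sub_mul, one_mul, smul_mul_assoc, smul_sub, smul_smul]
    rw [mul_sub, mul_add, mul_one, e1, e2, hL]
    have : k ^ 2 • (A * B) = (k * k) • (A * B) := by rw [pow_two]
    rw [this]
    simp only [smul_add]
    abel
  have hkey : (1 - k • B) * S = 1 + k • (α * L) - k • B := by
    rw [hS', ← mul_assoc, hβ₂', one_mul, ← hmain, ← mul_assoc, hα₁', one_mul]
  -- resolvent identities
  have hαA : k • (α * A) = α - 1 := by
    have h1 : α - k • (α * A) = 1 := by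
      rw [← hα₁', mul_sub, mul_one, mul_smul_comm]
    rw [eq_sub_iff_add_eq, add_comm]
    exact (sub_eq_iff_eq_add.mp h1).symm
  have hBβ : k • (B * β) = β - 1 := by
    have h1 : β - k • (B * β) = 1 := by
      rw [← hβ₂', sub_mul, one_mul, smul_mul_assoc]
    rw [eq_sub_iff_add_eq, add_comm]
    exact (sub_eq_iff_eq_add.mp h1).symm
  -- the nonexpansive conjugated operator T
  set T : H →L[ℝ] H := α * ((1 + k ^ 2 • (A * B)) * β) with hTdef
  have hT2 : T = (2⁻¹ : ℝ) • (1 + ((2:ℝ) • α - 1) * ((2:ℝ) • β - 1)) := by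
    have h3 : T = α * β + (k • (α * A)) * (k • (B * β)) := by
      rw [hTdef, add_mul, one_mul, mul_add]
      congr 1
      rw [smul_mul_assoc, smul_mul_assoc, mul_smul_comm, mul_smul_comm, smul_smul, pow_two]
      exact congrArg (fun X : H →L[ℝ] H => (k * k) • X) (mul_assoc α A (B * β)).symm
    rw [h3, hαA, hBβ]
    simp only [mul_sub, sub_mul, smul_mul_assoc, mul_smul_comm, mul_one, one_mul,
      smul_sub, smul_add]
    module
  have hTnon : ∀ x : H, ‖T x‖ ≤ ‖x‖ := by
    intro x
    have hx : T x = (2⁻¹ : ℝ) • (x + ((2:ℝ) • α ((2:ℝ) • β x - x) - ((2:ℝ) • β x - x))) := by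
      rw [hT2]
      simp [ContinuousLinearMap.smul_apply, ContinuousLinearMap.add_apply,
        ContinuousLinearMap.mul_apply, ContinuousLinearMap.sub_apply,
        ContinuousLinearMap.one_apply, map_sub, map_smul]
      module
    rw [hx, norm_smul]
    have h4 : ‖(2:ℝ)•β x - x‖ ≤ ‖x‖ := dr_reflection_nonexpansive B β hB hk.le hβ₂' x
    have h5 : ‖(2:ℝ)•α ((2:ℝ)•β x - x) - ((2:ℝ)•β x - x)‖ ≤ ‖(2:ℝ)•β x - x‖ :=
      dr_reflection_nonexpansive A α hA hk.le hα₂' _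
    have h6 := (norm_add_le x _).trans (add_le_add le_rfl (h5.trans h4))
    calc ‖(2⁻¹:ℝ)‖ * ‖x + ((2:ℝ)•α ((2:ℝ)•β x - x) - ((2:ℝ)•β x - x))‖
        ≤ ‖(2⁻¹:ℝ)‖ * (‖x‖ + ‖x‖) := by
          refine mul_le_mul_of_nonneg_left h6 (norm_nonneg _)
      _ = ‖x‖ := by
          rw [Real.norm_of_nonneg (by norm_num : (0:ℝ) ≤ 2⁻¹)]; ring
  have hTpow : ∀ (m : ℕ) (x : H), ‖(T ^ m) x‖ ≤ ‖x‖ := by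
    intro m
    induction m with
    | zero => intro x; simp
    | succ m ih =>
      intro x
      rw [pow_succ]
      calc ‖(T ^ m * T) x‖ = ‖(T ^ m) (T x)‖ := rfl
        _ ≤ ‖T x‖ := ih (T x)
        _ ≤ ‖x‖ := hTnon x
  have hSmβ : ∀ m : ℕ, S ^ m * β = β * T ^ m := by
    intro m
    induction m with
    | zero => simp
    | succ m ih =>
      have hSβ : S * β = β * T := by
        rw [hS', hTdef]
        simp only [mul_assoc]
      rw [pow_succ, pow_succ, mul_assoc, hSβ, ← mul_assoc, ih, mul_assoc]
  have hpow : ∀ (m : ℕ) (x : H), ‖(S ^ m) (β x)‖ ≤ ‖x‖ := by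
    intro m x
    have h1 : (S ^ m) (β x) = β ((T ^ m) x) := by
      have := congrArg (fun f : H →L[ℝ] H => f x) (hSmβ m)
      simpa [ContinuousLinearMap.mul_apply] using this
    rw [h1]
    exact (hβcon _).trans (hTpow m x)
  -- local error, propagated
  have hloc : ∀ (m : ℕ) (ξ : H),
      ‖(S ^ m) (NormedSpace.exp (k • L) ξ - S ξ)‖ ≤ k ^ 2 * C * ‖L (L ξ)‖ := by
    intro m ξ
    set E := NormedSpace.exp (k • L) with hEdef
    have hβid : ∀ z : H, β ((1 - k • B) z) = z := by
      intro z
      have := congrArg (fun f : H →L[ℝ] H => f z) hβ₁'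
      simpa [ContinuousLinearMap.mul_apply, ContinuousLinearMap.sub_apply] using this
    have hD : E ξ - S ξ = β ((1 - k • B) (E ξ - S ξ)) := (hβid _).symm
    have hDsplit : (1 - k • B) (E ξ - S ξ)
        = (E ξ - ξ - k • α (L ξ)) - k • ((B ∘L Linv) (E (L ξ) - L ξ)) := by
      have h1 : (1 - k • B) (S ξ) = ξ + k • α (L ξ) - k • B ξ := by
        have := congrArg (fun f : H →L[ℝ] H => f ξ) hkey
        simpa [ContinuousLinearMap.mul_apply, ContinuousLinearMap.sub_apply,
          ContinuousLinearMap.add_apply, ContinuousLinearMap.smul_apply,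
          ContinuousLinearMap.one_apply] using this
      have h2 : (1 - k • B) (E ξ - S ξ) = (E ξ - k • B (E ξ)) - (ξ + k • α (L ξ) - k • B ξ) := by
        rw [map_sub, ← h1]
        congr 1
      rw [h2]
      have h3 : (B ∘L Linv) (E (L ξ) - L ξ) = B (E ξ) - B ξ := by
        have h4 : L (E ξ - ξ) = E (L ξ) - L ξ := by
          rw [map_sub, dr_exp_comm]
        rw [← h4, ← hBop (E ξ - ξ), map_sub]
      rw [h3, smul_sub]
      abel
    have h5 : ‖(1 - k • B) (E ξ - S ξ)‖ ≤ k ^ 2 * C * ‖L (L ξ)‖ := by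
      rw [hDsplit]
      have h6 : ‖E ξ - ξ - k • α (L ξ)‖ ≤ k ^ 2 * (1 / 2 + c) * ‖L (L ξ)‖ :=
        dr_local_error A B L Linv α hA hLd hk hL hLinv₁' hLinv₂' hα₁' hα₂' ξ
      have h7 : ‖k • ((B ∘L Linv) (E (L ξ) - L ξ))‖ ≤ k * (c * (k * ‖L (L ξ)‖)) := by
        rw [norm_smul, Real.norm_of_nonneg hk.le]
        refine mul_le_mul_of_nonneg_left ?_ hk.le
        refine ((B ∘L Linv).le_opNorm _).trans ?_
        exact mul_le_mul_of_nonneg_left (dr_exp_sub_one L hLd hk.le (L ξ)) hc0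
      calc ‖(E ξ - ξ - k • α (L ξ)) - k • ((B ∘L Linv) (E (L ξ) - L ξ))‖
          ≤ ‖E ξ - ξ - k • α (L ξ)‖ + ‖k • ((B ∘L Linv) (E (L ξ) - L ξ))‖ := norm_sub_le _ _
        _ ≤ k ^ 2 * (1 / 2 + c) * ‖L (L ξ)‖ + k * (c * (k * ‖L (L ξ)‖)) := add_le_add h6 h7
        _ = k ^ 2 * C * ‖L (L ξ)‖ := by rw [hCdef]; ring
    calc ‖(S ^ m) (E ξ - S ξ)‖ = ‖(S ^ m) (β ((1 - k • B) (E ξ - S ξ)))‖ := by rw [← hD]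
      _ ≤ ‖(1 - k • B) (E ξ - S ξ)‖ := hpow m _
      _ ≤ k ^ 2 * C * ‖L (L ξ)‖ := h5
  -- induction on the number of steps
  have main : ∀ (m : ℕ) (ζ : H),
      ‖(NormedSpace.exp ((m * k) • L)) ζ - (S ^ m) ζ‖ ≤ (m * k) * k * C * ‖L (L ζ)‖ := by
    intro m
    induction m with
    | zero =>
      intro ζ
      simp [NormedSpace.exp_zero]
    | succ m ih =>
      intro ζ
      have hcast : ((m : ℝ) + 1) * k = m * k + k := by ring
      have hexp : NormedSpace.exp ((((m:ℕ) + 1 : ℕ) * k : ℝ) • L) ζ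
          = NormedSpace.exp (((m : ℝ) * k) • L) (NormedSpace.exp (k • L) ζ) := by
        have hcomm : Commute (((m : ℝ) * k) • L) (k • L) := by
          refine ContinuousLinearMap.ext fun y => ?_
          simp [ContinuousLinearMap.mul_apply, map_smul, smul_smul, mul_comm]
        have h1 : ((((m:ℕ) + 1 : ℕ) : ℝ) * k) • L = ((m : ℝ) * k) • L + k • L := by
          push_cast
          rw [hcast, add_smul]
        rw [h1, NormedSpace.exp_add_of_commute_of_mem_ball (𝕂 := ℝ) hcomm
          ((NormedSpace.expSeries_radius_eq_top ℝ (H →L[ℝ] H)).symm ▸ edist_lt_top _ _)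
          ((NormedSpace.expSeries_radius_eq_top ℝ (H →L[ℝ] H)).symm ▸ edist_lt_top _ _)]
        rfl
      have hS1 : (S ^ (m + 1)) ζ = (S ^ m) (S ζ) := by
        rw [pow_succ]; rfl
      set Eζ := NormedSpace.exp (k • L) ζ with hEζ
      have hLLE : L (L Eζ) = NormedSpace.exp (k • L) (L (L ζ)) := by
        rw [hEζ, dr_exp_comm, dr_exp_comm]
      have h8 : ‖L (L Eζ)‖ ≤ ‖L (L ζ)‖ := by
        rw [hLLE]
        exact dr_exp_contraction L hLd hk.le _
      have h9 : ‖NormedSpace.exp (((m : ℝ) * k) • L) Eζ - (S ^ m) Eζ‖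
          ≤ (m * k) * k * C * ‖L (L ζ)‖ := by
        refine (ih Eζ).trans ?_
        refine mul_le_mul_of_nonneg_left h8 ?_
        positivity
      have h10 : ‖(S ^ m) Eζ - (S ^ m) (S ζ)‖ ≤ k ^ 2 * C * ‖L (L ζ)‖ := by
        rw [← map_sub]
        exact hloc m ζ
      calc ‖(NormedSpace.exp (((((m:ℕ) + 1 : ℕ)) * k : ℝ) • L)) ζ - (S ^ (m + 1)) ζ‖
          = ‖(NormedSpace.exp (((m : ℝ) * k) • L) Eζ - (S ^ m) Eζ)
              + ((S ^ m) Eζ - (S ^ m) (S ζ))‖ := by rw [hexp, hS1]; congr 1; abel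
        _ ≤ ‖NormedSpace.exp (((m : ℝ) * k) • L) Eζ - (S ^ m) Eζ‖
              + ‖(S ^ m) Eζ - (S ^ m) (S ζ)‖ := norm_add_le _ _
        _ ≤ (m * k) * k * C * ‖L (L ζ)‖ + k ^ 2 * C * ‖L (L ζ)‖ := add_le_add h9 h10
        _ = ((((m:ℕ) + 1 : ℕ) : ℝ) * k) * k * C * ‖L (L ζ)‖ := by push_cast; ring
  exact main n η
end

section
/- For all T > 0 and C₁, C₂, C_A, C_L > 0 there exists a constant C > 0, depending only on T, C₁, C₂, C_A, C_L, with the following property. Let H be a real Hilbert space and L : H → H a bounded dissipative bijective linear operator. Let H' be a finite-dimensional real inner product space, J : H' → H an injective continuous linear map with C₁‖J v‖ ≤ ‖v‖' ≤ C₂‖J v‖ for all v ∈ H', and P : H → H' a continuous linear map. Let A', B' : H' → H' be linear operators that are dissipative with respect to the inner product of H', such that L' = A' + B' is bijective with ‖L'⁻¹‖' ≤ C_L and ‖A' ∘ L'⁻¹‖' ≤ C_A (operator norms with respect to ‖·‖'). Suppose ε ≥ 0 is such that for all v ∈ H: ‖J(P v) − v‖ ≤ ε(‖v‖ + ‖L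 v‖) and ‖J(L'⁻¹(P v)) − L⁻¹ v‖ ≤ ε(‖v‖ + ‖L v‖). For k > 0 let S' = (I − kB')⁻¹ ∘ (I − kA')⁻¹ ∘ (I + k² A'∘B') and Q = L'⁻¹ ∘ P ∘ L. Then for every n ∈ ℕ and k > 0 with nk ≤ T and every η ∈ H: ‖exp(nkL)η − J(S'ⁿ(Qη))‖ ≤ C(ε + k)(‖Lη‖ + ‖L²η‖ + ‖L³η‖). -/
open scoped RealInnerProductSpace
open NormedSpace

section ExpAux

variable {H : Type} [NormedAddCommGroup H] [InnerProductSpace ℝ H] [CompleteSpace H]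

lemma expApply_hasDerivAt (L : H →L[ℝ] H) (v : H) (t : ℝ) :
    HasDerivAt (fun s : ℝ => exp (s • L) v) (exp (t • L) (L v)) t := by
  have h := hasDerivAt_exp_smul_const (𝕂 := ℝ) L t
  have h2 := h.clm_apply (hasDerivAt_const t v)
  simpa [ContinuousLinearMap.mul_apply] using h2

lemma exp_comm_apply (L : H →L[ℝ] H) (t : ℝ) (v : H) :
    exp (t • L) (L v) = L (exp (t • L) v) := by
  have hc : Commute (t • L) L := by
    show (t • L) * L = L * (t • L)
    ext x
    simp [ContinuousLinearMap.mul_apply]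
  have h : Commute (exp (t • L)) L := hc.exp_left
  calc exp (t • L) (L v) = (exp (t • L) * L) v := rfl
    _ = (L * exp (t • L)) v := by rw [h.eq]
    _ = L (exp (t • L) v) := rfl

lemma exp_contraction (L : H →L[ℝ] H) (hL : ∀ v : H, ⟪L v, v⟫ ≤ 0)
    {t : ℝ} (ht : 0 ≤ t) (v : H) : ‖exp (t • L) v‖ ≤ ‖v‖ := by
  set f : ℝ → H := fun s => exp (s • L) v with hf
  have hder : ∀ s : ℝ, HasDerivAt (fun r => ⟪f r, f r⟫)
      (⟪f s, exp (s • L) (L v)⟫ + ⟪exp (s • L) (L v), f s⟫) s := by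
    intro s
    exact HasDerivAt.inner (𝕜 := ℝ) (expApply_hasDerivAt L v s) (expApply_hasDerivAt L v s)
  have hant : AntitoneOn (fun s => ⟪f s, f s⟫) (Set.Ici 0) := by
    apply antitoneOn_of_deriv_nonpos (convex_Ici 0)
    · exact fun s _ => ((hder s).differentiableAt).continuousAt.continuousWithinAt
    · exact fun s _ => ((hder s).differentiableAt).differentiableWithinAt
    · intro s _
      rw [(hder s).deriv]
      have h1 : exp (s • L) (L v) = L (f s) := exp_comm_apply L s v
      rw [h1, real_inner_comm (f s) (L (f s))]
      linarith [hL (f s), real_inner_comm (L (f s)) (f s)]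
  have h0 : ⟪f t, f t⟫ ≤ ⟪f 0, f 0⟫ := hant Set.self_mem_Ici ht ht
  have hf0 : f 0 = v := by simp [hf, NormedSpace.exp_zero]
  rw [hf0, real_inner_self_eq_norm_sq, real_inner_self_eq_norm_sq] at h0
  exact (pow_le_pow_iff_left₀ (norm_nonneg _) (norm_nonneg _) two_ne_zero).mp h0

lemma exp_sub_self_le (L : H →L[ℝ] H) (hL : ∀ v : H, ⟪L v, v⟫ ≤ 0)
    {t : ℝ} (ht : 0 ≤ t) (v : H) : ‖exp (t • L) v - v‖ ≤ t * ‖L v‖ := by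
  have key := Convex.norm_image_sub_le_of_norm_hasDerivWithin_le
    (f := fun s : ℝ => exp (s • L) v) (f' := fun s : ℝ => exp (s • L) (L v))
    (s := Set.Icc 0 t)
    (fun s _ => (expApply_hasDerivAt L v s).hasDerivWithinAt)
    (fun s hs => exp_contraction L hL hs.1 (L v)) (convex_Icc 0 t)
    (Set.left_mem_Icc.2 ht) (Set.right_mem_Icc.2 ht)
  simp only [zero_smul, NormedSpace.exp_zero, ContinuousLinearMap.one_apply, sub_zero,
    Real.norm_eq_abs, abs_of_nonneg ht] at key
  calc ‖exp (t • L) v - v‖ ≤ ‖L v‖ * t := key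
    _ = t * ‖L v‖ := by ring

lemma exp_taylor1 (L : H →L[ℝ] H) (hL : ∀ v : H, ⟪L v, v⟫ ≤ 0)
    {t : ℝ} (ht : 0 ≤ t) (v : H) :
    ‖exp (t • L) v - v - t • L v‖ ≤ t ^ 2 * ‖L (L v)‖ := by
  have hg : ∀ s : ℝ, HasDerivAt (fun r : ℝ => exp (r • L) v - v - r • L v)
      (exp (s • L) (L v) - L v) s := by
    intro s
    have h1 := expApply_hasDerivAt L v s
    have h2 : HasDerivAt (fun r : ℝ => v + r • L v) (L v) s := by
      simpa using ((hasDerivAt_id s).smul_const (L v)).const_add v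
    rw [show (fun r : ℝ => exp (r • L) v - v - r • L v) = fun r => exp (r • L) v - (v + r • L v) from by funext r; rw [sub_sub]]
    exact h1.sub h2
  have bound : ∀ s ∈ Set.Icc (0:ℝ) t, ‖exp (s • L) (L v) - L v‖ ≤ t * ‖L (L v)‖ := by
    intro s hs
    refine (exp_sub_self_le L hL hs.1 (L v)).trans ?_
    exact mul_le_mul_of_nonneg_right hs.2 (norm_nonneg _)
  have key := Convex.norm_image_sub_le_of_norm_hasDerivWithin_le
    (fun s _ => (hg s).hasDerivWithinAt) bound (convex_Icc 0 t)
    (Set.left_mem_Icc.2 ht) (Set.right_mem_Icc.2 ht)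
  simp only [zero_smul, NormedSpace.exp_zero, ContinuousLinearMap.one_apply, sub_zero,
    sub_self, Real.norm_eq_abs, abs_of_nonneg ht] at key
  calc ‖exp (t • L) v - v - t • L v‖ ≤ t * ‖L (L v)‖ * t := key
    _ = t ^ 2 * ‖L (L v)‖ := by ring

end ExpAux

open scoped RealInnerProductSpace

set_option linter.unusedSectionVars false

section InnerAux

variable {H' : Type} [NormedAddCommGroup H'] [InnerProductSpace ℝ H']

lemma diss_norm_le {x y : H'} (h : ⟪y, x⟫ ≤ 0) : ‖x‖ ≤ ‖x - y‖ := by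
  have h2 : ‖x‖ ^ 2 ≤ ‖x - y‖ ^ 2 := by
    rw [norm_sub_sq_real]
    nlinarith [sq_nonneg ‖y‖, real_inner_comm x y]
  exact (pow_le_pow_iff_left₀ (norm_nonneg _) (norm_nonneg _) two_ne_zero).mp h2

lemma diss_norm_add_le {x y : H'} (h : ⟪y, x⟫ ≤ 0) : ‖x + y‖ ≤ ‖x - y‖ := by
  have h2 : ‖x + y‖ ^ 2 ≤ ‖x - y‖ ^ 2 := by
    rw [norm_sub_sq_real, norm_add_sq_real]
    nlinarith [real_inner_comm x y]
  exact (pow_le_pow_iff_left₀ (norm_nonneg _) (norm_nonneg _) two_ne_zero).mp h2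

/-- pointwise inverse relation -/
lemma resolvent_eq (A α : H' →L[ℝ] H') (hα : (1 - A) * α = 1) (w : H') :
    α w - A (α w) = w := by
  have h := congrArg (fun f : H' →L[ℝ] H' => f w) hα
  simpa [ContinuousLinearMap.mul_apply, ContinuousLinearMap.sub_apply,
    ContinuousLinearMap.one_apply, map_sub] using h

lemma resolvent_contract (A α : H' →L[ℝ] H') (hd : ∀ v : H', ⟪A v, v⟫ ≤ 0)
    (hα : (1 - A) * α = 1) (w : H') : ‖α w‖ ≤ ‖w‖ := by
  have h := resolvent_eq A α hα w
  calc ‖α w‖ ≤ ‖α w - A (α w)‖ := diss_norm_le (hd (α w))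
    _ = ‖w‖ := by rw [h]

lemma reflection_contract (A α : H' →L[ℝ] H') (hd : ∀ v : H', ⟪A v, v⟫ ≤ 0)
    (hα : (1 - A) * α = 1) (w : H') : ‖(2:ℝ) • α w - w‖ ≤ ‖w‖ := by
  set x := α w with hx
  have h : x - A x = w := resolvent_eq A α hα w
  have h2 : (2:ℝ) • x - w = x + A x := by rw [← h]; module
  rw [h2]
  calc ‖x + A x‖ ≤ ‖x - A x‖ := diss_norm_add_le (hd x)
    _ = ‖w‖ := by rw [h]

lemma stabilityT (A B α β : H' →L[ℝ] H')
    (hdA : ∀ v : H', ⟪A v, v⟫ ≤ 0) (hdB : ∀ v : H', ⟪B v, v⟫ ≤ 0)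
    (hα2 : (1 - A) * α = 1) (hβ2 : (1 - B) * β = 1) (v : H') :
    ‖(α * β + (α - 1) * (β - 1)) v‖ ≤ ‖v‖ := by
  set T := α * β + (α - 1) * (β - 1) with hT
  have hTv : (2:ℝ) • (T v) = v + ((2:ℝ) • α ((2:ℝ) • β v - v) - ((2:ℝ) • β v - v)) := by
    simp only [hT, ContinuousLinearMap.add_apply, ContinuousLinearMap.mul_apply,
      ContinuousLinearMap.sub_apply, ContinuousLinearMap.one_apply, map_sub, map_smul]
    module
  have h1 : ‖(2:ℝ) • β v - v‖ ≤ ‖v‖ := reflection_contract B β hdB hβ2 v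
  have h2 : ‖(2:ℝ) • α ((2:ℝ) • β v - v) - ((2:ℝ) • β v - v)‖ ≤ ‖(2:ℝ) • β v - v‖ :=
    reflection_contract A α hdA hα2 _
  have h3 : ‖(2:ℝ) • (T v)‖ ≤ ‖v‖ + ‖v‖ := by
    rw [hTv]
    exact (norm_add_le _ _).trans (by linarith)
  rw [norm_smul, Real.norm_ofNat] at h3
  linarith

section RingIds

variable {R : Type*} [Ring R]

lemma ring_comm_aux {A α : R} (hα1 : α * (1 - A) = 1) (hα2 : (1 - A) * α = 1) :
    α * A = A * α := by
  calc α * A = α * (A * ((1 - A) * α)) := by rw [hα2, mul_one]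
    _ = (α * (1 - A)) * (A * α) := by noncomm_ring
    _ = A * α := by rw [hα1, one_mul]

lemma ring_Aα {A α : R} (hα2 : (1 - A) * α = 1) : A * α = α - 1 := by
  have h : α - A * α = (1 - A) * α := by noncomm_ring
  rw [hα2] at h
  rw [← h]; noncomm_ring

lemma ring_id1 {A B α β S : R} (hα1 : α * (1 - A) = 1) (hα2 : (1 - A) * α = 1)
    (hβ2 : (1 - B) * β = 1) (hS : S = β * α * (1 + A * B)) :
    (1 - B) * S = α + (α - 1) * B := by
  calc (1 - B) * S = ((1 - B) * β) * (α * (1 + A * B)) := by rw [hS]; noncomm_ring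
    _ = α * (1 + A * B) := by rw [hβ2, one_mul]
    _ = α + (α * A) * B := by noncomm_ring
    _ = α + (A * α) * B := by rw [ring_comm_aux hα1 hα2]
    _ = α + (α - 1) * B := by rw [ring_Aα hα2]

lemma ring_id2 {B α β : R} (hβ1 : β * (1 - B) = 1) :
    (α * β + (α - 1) * (β - 1)) * (1 - B) = α + (α - 1) * B := by
  calc (α * β + (α - 1) * (β - 1)) * (1 - B)
      = α * (β * (1 - B)) + (α - 1) * (β * (1 - B)) - (α - 1) * (1 - B) := by noncomm_ring
    _ = α * 1 + (α - 1) * 1 - (α - 1) * (1 - B) := by rw [hβ1]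
    _ = α + (α - 1) * B := by noncomm_ring

end RingIds

lemma local_error_identity (Aop Bop α S : H' →L[ℝ] H')
    (hα : α * (1 - Aop) = 1)
    (hid1 : (1 - Bop) * S = α + (α - 1) * Bop) (a b : H') :
    (1 - Bop) (a - S b) =
      α ((a - b) - (Aop b + Bop b) - Aop (a - b)) - Bop (a - b) := by
  have ha : α a - α (Aop a) = a := by
    have h := congrArg (fun f : H' →L[ℝ] H' => f a) hα
    simpa [ContinuousLinearMap.mul_apply, ContinuousLinearMap.sub_apply,
      ContinuousLinearMap.one_apply, map_sub] using h
  have hSb : (1 - Bop) (S b) = α b + (α (Bop b) - Bop b) := by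
    have h := congrArg (fun f : H' →L[ℝ] H' => f b) hid1
    simpa [ContinuousLinearMap.mul_apply, ContinuousLinearMap.sub_apply,
      ContinuousLinearMap.add_apply, ContinuousLinearMap.one_apply, map_sub] using h
  have hLHS : (1 - Bop) (a - S b) = (a - Bop a) - (α b + (α (Bop b) - Bop b)) := by
    rw [map_sub, hSb]
    simp [ContinuousLinearMap.sub_apply, ContinuousLinearMap.one_apply]
  rw [hLHS]
  simp only [map_sub, map_add]
  have h0 : a - (α a - α (Aop a)) = 0 := by rw [ha, sub_self]
  rw [← sub_eq_zero, ← h0]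
  abel

end InnerAux

set_option maxHeartbeats 8000000 in
/-- (Bounded-operator form of Theorem 4.1, Douglas–Rachford case
`r = 1`, `q = 1`.) For all `T > 0` and `C₁, C₂, C_A, C_L > 0` there is `C > 0`
such that for any real Hilbert space `H`, bounded dissipative bijective `L`
(inverse `Linv`), finite-dimensional inner-product space `H'` embedded via `J`
with uniformly equivalent norms, projection `P`, dissipative `A', B'` with
`L' = A' + B'` bijective, `‖L'⁻¹‖ ≤ C_L`, `‖A' ∘ L'⁻¹‖ ≤ C_A`, and `ε ≥ 0`
satisfying the approximation and elliptic-error hypotheses: for the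
Douglas–Rachford operator `S' = (I - kB')⁻¹(I - kA')⁻¹(I + k²A'B')` and
`Q = L'⁻¹ P L`, whenever `n k ≤ T`,
`‖exp(nkL)η - J(S'ⁿ(Qη))‖ ≤ C(ε + k)(‖Lη‖ + ‖L²η‖ + ‖L³η‖)`. -/
theorem full_discretization_error_bound_douglas_rachford
    (T C₁ C₂ CA CL : ℝ) (hT : 0 < T) (hC₁ : 0 < C₁) (hC₂ : 0 < C₂)
    (hCA : 0 < CA) (hCL : 0 < CL) :
    ∃ C : ℝ, 0 < C ∧
      ∀ (H : Type) [NormedAddCommGroup H] [InnerProductSpace ℝ H] [CompleteSpace H]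
        (H' : Type) [NormedAddCommGroup H'] [InnerProductSpace ℝ H']
        [FiniteDimensional ℝ H']
        (L : H →L[ℝ] H), (∀ v : H, ⟪L v, v⟫ ≤ 0) →
        ∀ (Linv : H →L[ℝ] H), Linv ∘L L = 1 → L ∘L Linv = 1 →
        ∀ (J : H' →L[ℝ] H), Function.Injective ⇑J →
        (∀ v : H', C₁ * ‖J v‖ ≤ ‖v‖ ∧ ‖v‖ ≤ C₂ * ‖J v‖) →
        ∀ (P : H →L[ℝ] H') (A' B' : H' →L[ℝ] H'),
        (∀ v : H', ⟪A' v, v⟫ ≤ 0) → (∀ v : H', ⟪B' v, v⟫ ≤ 0) →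
        ∀ (L' : H' →L[ℝ] H'), L' = A' + B' →
        ∀ (L'inv : H' →L[ℝ] H'), L'inv ∘L L' = 1 → L' ∘L L'inv = 1 →
        ‖L'inv‖ ≤ CL → ‖A' ∘L L'inv‖ ≤ CA →
        ∀ (ε : ℝ), 0 ≤ ε →
        (∀ v : H, ‖J (P v) - v‖ ≤ ε * (‖v‖ + ‖L v‖)) →
        (∀ v : H, ‖J (L'inv (P v)) - Linv v‖ ≤ ε * (‖v‖ + ‖L v‖)) →
        ∀ (n : ℕ) (k : ℝ), 0 < k → (n : ℝ) * k ≤ T →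
        ∀ (α' β' : H' →L[ℝ] H'),
          α' ∘L (1 - k • A') = 1 → (1 - k • A' : H' →L[ℝ] H') ∘L α' = 1 →
          β' ∘L (1 - k • B') = 1 → (1 - k • B' : H' →L[ℝ] H') ∘L β' = 1 →
        ∀ (S' : H' →L[ℝ] H'), S' = β' ∘L α' ∘L (1 + k ^ 2 • (A' ∘L B')) →
        ∀ (Q : H →L[ℝ] H'), Q = L'inv ∘L P ∘L L →
        ∀ (η : H),
        ‖(NormedSpace.exp (((n : ℝ) * k) • L)) η - J ((S' ^ n) (Q η))‖ ≤
          C * (ε + k) * (‖L η‖ + ‖L (L η)‖ + ‖L (L (L η))‖) := by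
  refine ⟨1 + C₂ * (2*CL + 6*CA + 5) * T / C₁ + (1 + 3 * C₂ / C₁ * (2*CL + T*(1+CA))),
    by positivity, ?_⟩
  intro H _ _ _ H' _ _ _ L hL Linv hLi1 hLi2 J hJinj hJnorm P A' B' hA'd hB'd L' hL'def
    L'inv hL'i1 hL'i2 hCLb hCAb ε hε happrox hell n k hk hnk α' β' hα1 hα2 hβ1 hβ2
    S' hS'def Q hQdef η
  obtain ⟨Z, hZdef⟩ : ∃ z : ℝ, z = ‖L η‖ + ‖L (L η)‖ + ‖L (L (L η))‖ := ⟨_, rfl⟩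
  rw [← hZdef]
  have hn1 := norm_nonneg (L η)
  have hn2 := norm_nonneg (L (L η))
  have hn3 := norm_nonneg (L (L (L η)))
  have hZ : 0 ≤ Z := by rw [hZdef]; positivity
  -- basic consequences of hypotheses
  have hJle : ∀ v : H', ‖J v‖ ≤ (1 / C₁) * ‖v‖ := by
    intro v
    have h := (hJnorm v).1
    have h2 := mul_le_mul_of_nonneg_left h (le_of_lt (one_div_pos.mpr hC₁))
    calc ‖J v‖ = 1 / C₁ * (C₁ * ‖J v‖) := by field_simp
      _ ≤ 1 / C₁ * ‖v‖ := h2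
  have hQv : ∀ v : H, Q v = L'inv (P (L v)) := by
    intro v; rw [hQdef]; rfl
  have hL'L'inv : ∀ x : H', L' (L'inv x) = x := by
    intro x
    have h := congrArg (fun f : H' →L[ℝ] H' => f x) hL'i2
    simpa using h
  have hLinvL : ∀ x : H, Linv (L x) = x := by
    intro x
    have h := congrArg (fun f : H →L[ℝ] H => f x) hLi1
    simpa using h
  have hL'Qv : ∀ v : H, L' (Q v) = P (L v) := by
    intro v; rw [hQv]; exact hL'L'inv _
  have hL'invle : ∀ x : H', ‖L'inv x‖ ≤ CL * ‖x‖ := fun x =>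
    (L'inv.le_opNorm x).trans (mul_le_mul_of_nonneg_right hCLb (norm_nonneg x))
  have hALle : ∀ x : H', ‖A' (L'inv x)‖ ≤ CA * ‖x‖ := by
    intro x
    have h := (A' ∘L L'inv).le_opNorm x
    rw [ContinuousLinearMap.comp_apply] at h
    exact h.trans (mul_le_mul_of_nonneg_right hCAb (norm_nonneg x))
  have hB'eq : ∀ y : H', B' y = L' y - A' y := by
    intro y; rw [hL'def]; simp
  have hBLle : ∀ x : H', ‖B' (L'inv x)‖ ≤ (1 + CA) * ‖x‖ := by
    intro x
    rw [hB'eq, hL'L'inv]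
    calc ‖x - A' (L'inv x)‖ ≤ ‖x‖ + ‖A' (L'inv x)‖ := norm_sub_le _ _
      _ ≤ ‖x‖ + CA * ‖x‖ := by linarith [hALle x]
      _ = (1 + CA) * ‖x‖ := by ring
  have hJPle : ∀ v : H, ‖J (P v)‖ ≤ ‖v‖ + ε * (‖v‖ + ‖L v‖) := by
    intro v
    calc ‖J (P v)‖ = ‖(J (P v) - v) + v‖ := by rw [sub_add_cancel]
      _ ≤ ‖J (P v) - v‖ + ‖v‖ := norm_add_le _ _
      _ ≤ ‖v‖ + ε * (‖v‖ + ‖L v‖) := by linarith [happrox v]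
  have hPle : ∀ v : H, ‖P v‖ ≤ C₂ * (‖v‖ + ε * (‖v‖ + ‖L v‖)) := by
    intro v
    exact (hJnorm (P v)).2.trans (mul_le_mul_of_nonneg_left (hJPle v) hC₂.le)
  -- discrete operators
  obtain ⟨Aop, hAopdef⟩ : ∃ a : H' →L[ℝ] H', a = k • A' := ⟨_, rfl⟩
  obtain ⟨Bop, hBopdef⟩ : ∃ b : H' →L[ℝ] H', b = k • B' := ⟨_, rfl⟩
  have hdA : ∀ v : H', ⟪Aop v, v⟫ ≤ 0 := by
    intro v
    rw [hAopdef]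
    simp only [ContinuousLinearMap.smul_apply]
    rw [real_inner_smul_left]
    exact mul_nonpos_iff.mpr (Or.inl ⟨hk.le, hA'd v⟩)
  have hdB : ∀ v : H', ⟪Bop v, v⟫ ≤ 0 := by
    intro v
    rw [hBopdef]
    simp only [ContinuousLinearMap.smul_apply]
    rw [real_inner_smul_left]
    exact mul_nonpos_iff.mpr (Or.inl ⟨hk.le, hB'd v⟩)
  have hα1' : α' * (1 - Aop) = 1 := by rw [hAopdef]; exact hα1
  have hα2' : (1 - Aop) * α' = 1 := by rw [hAopdef]; exact hα2
  have hβ1' : β' * (1 - Bop) = 1 := by rw [hBopdef]; exact hβ1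
  have hβ2' : (1 - Bop) * β' = 1 := by rw [hBopdef]; exact hβ2
  have hS'mul : S' = β' * α' * (1 + Aop * Bop) := by
    rw [hS'def, hAopdef, hBopdef]
    ext x
    simp only [ContinuousLinearMap.mul_apply, ContinuousLinearMap.comp_apply,
      ContinuousLinearMap.add_apply, ContinuousLinearMap.one_apply,
      ContinuousLinearMap.smul_apply, ContinuousLinearMap.coe_smul', Pi.smul_apply,
      map_add, map_smul]
    rw [smul_smul, pow_two]
  have hid1 : (1 - Bop) * S' = α' + (α' - 1) * Bop := ring_id1 hα1' hα2' hβ2' hS'mul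
  have hid2 : (α' * β' + (α' - 1) * (β' - 1)) * (1 - Bop) = α' + (α' - 1) * Bop :=
    ring_id2 hβ1'
  obtain ⟨Top, hTopdef⟩ : ∃ t : H' →L[ℝ] H', t = α' * β' + (α' - 1) * (β' - 1) := ⟨_, rfl⟩
  have hstab : ∀ v : H', ‖Top v‖ ≤ ‖v‖ := by
    rw [hTopdef]
    exact stabilityT Aop Bop α' β' hdA hdB hα2' hβ2'
  have hres : ∀ v : H', ‖v‖ ≤ ‖(1 - Bop) v‖ := by
    intro v
    have h : (1 - Bop) v = v - Bop v := by
      simp [ContinuousLinearMap.sub_apply]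
    rw [h]
    exact diss_norm_le (hdB v)
  have hBS : ∀ v : H', (1 - Bop) (S' v) = Top ((1 - Bop) v) := by
    intro v
    have hid12 : (1 - Bop) * S' = Top * (1 - Bop) := by
      rw [hTopdef]; exact hid1.trans hid2.symm
    have h1 := congrArg (fun f : H' →L[ℝ] H' => f v) hid12
    simpa [ContinuousLinearMap.mul_apply] using h1
  have hpow : ∀ (m : ℕ) (v : H'), ‖(1 - Bop) ((S' ^ m) v)‖ ≤ ‖(1 - Bop) v‖ := by
    intro m
    induction m with
    | zero => intro v; simp
    | succ m ih =>
      intro v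
      have h : (S' ^ (m + 1)) v = (S' ^ m) (S' v) := by
        rw [pow_succ]
        simp [ContinuousLinearMap.mul_apply]
      rw [h]
      exact (ih (S' v)).trans (by rw [hBS v]; exact hstab _)
  -- semigroup facts
  obtain ⟨u, hudef⟩ : ∃ u : ℕ → H,
      u = fun m : ℕ => NormedSpace.exp (((m : ℝ) * k) • L) η := ⟨_, rfl⟩
  have hgoal : NormedSpace.exp (((n : ℝ) * k) • L) η = u n := by rw [hudef]
  rw [hgoal]
  have hmk : ∀ m : ℕ, 0 ≤ (m : ℝ) * k := fun m => by positivity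
  have hu0 : u 0 = η := by
    rw [hudef]
    simp [NormedSpace.exp_zero]
  have hustep : ∀ m : ℕ, u (m + 1) = NormedSpace.exp (k • L) (u m) := by
    intro m
    have hsplit : ((((m : ℕ) + 1 : ℕ) : ℝ) * k) • L = k • L + (((m : ℕ) : ℝ) * k) • L := by
      rw [← add_smul]
      congr 1
      push_cast
      ring
    have hcomm : Commute (k • L) ((((m : ℕ) : ℝ) * k) • L) := by
      show _ * _ = _ * _
      ext x
      simp [ContinuousLinearMap.mul_apply, smul_smul, mul_comm]
    rw [hudef]
    show NormedSpace.exp (((((m : ℕ) + 1 : ℕ) : ℝ) * k) • L) η = _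
    rw [hsplit, NormedSpace.exp_add_of_commute_of_mem_ball (𝕂 := ℝ) hcomm
      ((NormedSpace.expSeries_radius_eq_top ℝ (H →L[ℝ] H)).symm ▸ edist_lt_top _ _)
      ((NormedSpace.expSeries_radius_eq_top ℝ (H →L[ℝ] H)).symm ▸ edist_lt_top _ _)]
    rfl
  have hLu : ∀ m : ℕ, L (u m) = NormedSpace.exp (((m : ℝ) * k) • L) (L η) := by
    intro m; rw [hudef]; exact (exp_comm_apply L _ η).symm
  have hLLu : ∀ m : ℕ, L (L (u m)) = NormedSpace.exp (((m : ℝ) * k) • L) (L (L η)) := by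
    intro m; rw [hLu m]; exact (exp_comm_apply L _ (L η)).symm
  have hLLLu : ∀ m : ℕ,
      L (L (L (u m))) = NormedSpace.exp (((m : ℝ) * k) • L) (L (L (L η))) := by
    intro m; rw [hLLu m]; exact (exp_comm_apply L _ (L (L η))).symm
  have hLu1 : ∀ m : ℕ, ‖L (u m)‖ ≤ ‖L η‖ := by
    intro m; rw [hLu m]; exact exp_contraction L hL (hmk m) (L η)
  have hLu2 : ∀ m : ℕ, ‖L (L (u m))‖ ≤ ‖L (L η)‖ := by
    intro m; rw [hLLu m]; exact exp_contraction L hL (hmk m) (L (L η))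
  have hLu3 : ∀ m : ℕ, ‖L (L (L (u m)))‖ ≤ ‖L (L (L η))‖ := by
    intro m; rw [hLLLu m]; exact exp_contraction L hL (hmk m) (L (L (L η)))
  -- term 1 : elliptic projection error (works for every ε)
  have hterm1 : ∀ m : ℕ, ‖u m - J (Q (u m))‖ ≤ ε * (‖L η‖ + ‖L (L η)‖) := by
    intro m
    have h := hell (L (u m))
    rw [hLinvL (u m)] at h
    have heq : u m - J (Q (u m)) = -(J (L'inv (P (L (u m)))) - u m) := by
      rw [hQv]; abel
    rw [heq, norm_neg]
    refine h.trans ?_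
    have h1 := hLu1 m
    have h2 := hLu2 m
    nlinarith
  by_cases hε1 : ε ≤ 1
  · -- main branch
    obtain ⟨Dd, hDddef⟩ : ∃ d : ℝ,
        d = C₂ * (2*CL + 6*CA + 5) * ((k ^ 2 + ε * k) * Z) := ⟨_, rfl⟩
    have hstep : ∀ m : ℕ, ‖(1 - Bop) (Q (u (m + 1)) - S' (Q (u m)))‖ ≤ Dd := by
      intro m
      have hkey := local_error_identity Aop Bop α' S' hα1' hid1 (Q (u (m + 1))) (Q (u m))
      obtain ⟨δ, hδdef⟩ : ∃ d : H, d = u (m + 1) - u m := ⟨_, rfl⟩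
      have hQδ : Q (u (m + 1)) - Q (u m) = Q δ := by rw [hδdef, map_sub]
      rw [hQδ] at hkey
      rw [hkey]
      -- identify the drift term
      have hABb : Aop (Q (u m)) + Bop (Q (u m)) = k • P (L (u m)) := by
        rw [hAopdef, hBopdef]
        simp only [ContinuousLinearMap.smul_apply]
        rw [← smul_add]
        congr 1
        have h : A' (Q (u m)) + B' (Q (u m)) = L' (Q (u m)) := by
          rw [hL'def]; simp
        rw [h, hL'Qv]
      rw [hABb]
      -- exp facts for the step
      have hδexp : δ = NormedSpace.exp (k • L) (u m) - u m := by
        rw [hδdef, hustep m]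
      have hLδexp : L δ = NormedSpace.exp (k • L) (L (u m)) - L (u m) := by
        rw [hδexp, map_sub, ← exp_comm_apply]
      have hLLδexp : L (L δ) = NormedSpace.exp (k • L) (L (L (u m))) - L (L (u m)) := by
        rw [hLδexp, map_sub, ← exp_comm_apply]
      have hLδ : ‖L δ‖ ≤ k * ‖L (L η)‖ := by
        rw [hLδexp]
        exact (exp_sub_self_le L hL hk.le (L (u m))).trans
          (mul_le_mul_of_nonneg_left (hLu2 m) hk.le)
      have hLLδ : ‖L (L δ)‖ ≤ k * ‖L (L (L η))‖ := by
        rw [hLLδexp]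
        exact (exp_sub_self_le L hL hk.le (L (L (u m)))).trans
          (mul_le_mul_of_nonneg_left (hLu3 m) hk.le)
      obtain ⟨ρ, hρdef⟩ : ∃ r : H, r = L δ - k • L (L (u m)) := ⟨_, rfl⟩
      have hρ : ‖ρ‖ ≤ k ^ 2 * ‖L (L (L η))‖ := by
        have h := exp_taylor1 L hL hk.le (L (u m))
        have heq : ρ = NormedSpace.exp (k • L) (L (u m)) - L (u m) - k • L (L (u m)) := by
          rw [hρdef, hLδexp]
        rw [heq]
        exact h.trans (mul_le_mul_of_nonneg_left (hLu3 m) (by positivity))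
      have hLρ : ‖L ρ‖ ≤ 2 * k * ‖L (L (L η))‖ := by
        have heq : L ρ = L (L δ) - k • L (L (L (u m))) := by
          rw [hρdef, map_sub, map_smul]
        rw [heq]
        calc ‖L (L δ) - k • L (L (L (u m)))‖ ≤ ‖L (L δ)‖ + ‖k • L (L (L (u m)))‖ :=
              norm_sub_le _ _
          _ ≤ k * ‖L (L (L η))‖ + k * ‖L (L (L η))‖ := by
              rw [norm_smul, Real.norm_eq_abs, abs_of_nonneg hk.le]
              have := mul_le_mul_of_nonneg_left (hLu3 m) hk.le
              linarith [hLLδ]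
          _ = 2 * k * ‖L (L (L η))‖ := by ring
      -- decomposition of the main consistency term
      have hXdec : Q δ - k • P (L (u m)) =
          L'inv (P ρ) + k • (Q (L (u m)) - P (L (u m))) := by
        have h1 : Q δ = L'inv (P (L δ)) := hQv δ
        have h2 : L δ = ρ + k • L (L (u m)) := by rw [hρdef]; abel
        rw [h1, h2, map_add, map_smul, map_add, map_smul, hQv (L (u m))]
        rw [smul_sub]
        abel
      -- individual bounds
      have hz1 : ‖L η‖ ≤ Z := by rw [hZdef]; linarith
      have hz2 : ‖L (L η)‖ ≤ Z := by rw [hZdef]; linarith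
      have hz3 : ‖L (L (L η))‖ ≤ Z := by rw [hZdef]; linarith
      have hb1 : ‖L'inv (P ρ)‖ ≤ CL * C₂ * ((2 * k ^ 2 + 2 * ε * k) * Z) := by
        have h1 := hL'invle (P ρ)
        have h2 := hPle ρ
        have h3 : ‖ρ‖ + ε * (‖ρ‖ + ‖L ρ‖) ≤ (2 * k ^ 2 + 2 * ε * k) * Z := by
          nlinarith [hρ, hLρ, mul_le_mul_of_nonneg_left hz3 (mul_nonneg hk.le hk.le),
            mul_le_mul_of_nonneg_left hz3 (mul_nonneg hε hk.le),
            mul_le_mul_of_nonneg_left hρ hε, mul_le_mul_of_nonneg_left hLρ hε,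
            norm_nonneg ρ, norm_nonneg (L ρ), mul_nonneg hε hk.le,
            mul_nonneg hk.le hk.le,
            mul_nonneg (mul_nonneg hk.le hk.le) hn3, mul_nonneg (mul_nonneg hε hk.le) hn3]
        calc ‖L'inv (P ρ)‖ ≤ CL * ‖P ρ‖ := h1
          _ ≤ CL * (C₂ * (‖ρ‖ + ε * (‖ρ‖ + ‖L ρ‖))) :=
              mul_le_mul_of_nonneg_left h2 hCL.le
          _ ≤ CL * C₂ * ((2 * k ^ 2 + 2 * ε * k) * Z) := by
              nlinarith [mul_nonneg hCL.le hC₂.le]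
      have hb2 : ‖Q (L (u m)) - P (L (u m))‖ ≤ 2 * C₂ * ε * Z := by
        have e1 : ‖J (Q (L (u m))) - L (u m)‖ ≤
            ε * (‖L (L (u m))‖ + ‖L (L (L (u m)))‖) := by
          have h := hell (L (L (u m)))
          rw [hLinvL (L (u m))] at h
          rw [hQv (L (u m))]
          exact h
        have e2 := happrox (L (u m))
        have hJQP : ‖J (Q (L (u m)) - P (L (u m)))‖ ≤
            ε * (‖L (L (u m))‖ + ‖L (L (L (u m)))‖) + ε * (‖L (u m)‖ + ‖L (L (u m))‖) := by
          rw [map_sub]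
          calc ‖J (Q (L (u m))) - J (P (L (u m)))‖
              = ‖(J (Q (L (u m))) - L (u m)) - (J (P (L (u m))) - L (u m))‖ := by
                congr 1; abel
            _ ≤ ‖J (Q (L (u m))) - L (u m)‖ + ‖J (P (L (u m))) - L (u m)‖ := norm_sub_le _ _
            _ ≤ _ := add_le_add e1 e2
        have h := (hJnorm (Q (L (u m)) - P (L (u m)))).2
        refine h.trans ?_
        have h2 : ε * (‖L (L (u m))‖ + ‖L (L (L (u m)))‖) + ε * (‖L (u m)‖ + ‖L (L (u m))‖)
            ≤ 2 * ε * Z := by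
          have g1 := hLu1 m; have g2 := hLu2 m; have g3 := hLu3 m
          have hzz : ‖L η‖ + ‖L (L η)‖ + ‖L (L (L η))‖ ≤ Z := by rw [hZdef]
          nlinarith [mul_le_mul_of_nonneg_left g1 hε, mul_le_mul_of_nonneg_left g2 hε,
            mul_le_mul_of_nonneg_left g3 hε, mul_le_mul_of_nonneg_left hz1 hε,
            mul_le_mul_of_nonneg_left hz2 hε, mul_le_mul_of_nonneg_left hz3 hε]
        nlinarith [hJQP, norm_nonneg (J (Q (L (u m)) - P (L (u m))))]
      have hPLδ : ‖P (L δ)‖ ≤ 3 * C₂ * k * Z := by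
        have h := hPle (L δ)
        have h3 : ‖L δ‖ + ε * (‖L δ‖ + ‖L (L δ)‖) ≤ 3 * k * Z := by
          nlinarith [hLδ, hLLδ, mul_nonneg hk.le hZ,
            mul_le_mul_of_nonneg_left hz2 hk.le, mul_le_mul_of_nonneg_left hz3 hk.le,
            mul_le_mul_of_nonneg_left hLδ hε, mul_le_mul_of_nonneg_left hLLδ hε,
            mul_nonneg (mul_nonneg hk.le hε) hn2, mul_nonneg (mul_nonneg hk.le hε) hn3,
            mul_nonneg hk.le hn2, mul_nonneg hk.le hn3,
            mul_le_mul_of_nonneg_left hz2 (mul_nonneg hε hk.le),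
            mul_le_mul_of_nonneg_left hz3 (mul_nonneg hε hk.le),
            mul_nonneg (mul_nonneg hε hk.le) hn2, mul_nonneg (mul_nonneg hε hk.le) hn3]
        nlinarith [norm_nonneg (P (L δ))]
      have hb3 : ‖Aop (Q δ)‖ ≤ 3 * CA * C₂ * (k * (k * Z)) := by
        have heq : Aop (Q δ) = k • A' (L'inv (P (L δ))) := by
          rw [hAopdef, hQv δ]
          rfl
        rw [heq, norm_smul, Real.norm_eq_abs, abs_of_nonneg hk.le]
        have h := hALle (P (L δ))
        have h2 := mul_le_mul_of_nonneg_left hPLδ hCA.le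
        nlinarith [mul_le_mul_of_nonneg_left (h.trans h2) hk.le]
      have hb4 : ‖Bop (Q δ)‖ ≤ 3 * (1 + CA) * C₂ * (k * (k * Z)) := by
        have heq : Bop (Q δ) = k • B' (L'inv (P (L δ))) := by
          rw [hBopdef, hQv δ]
          rfl
        rw [heq, norm_smul, Real.norm_eq_abs, abs_of_nonneg hk.le]
        have h := hBLle (P (L δ))
        have h2 := mul_le_mul_of_nonneg_left hPLδ (by linarith : (0:ℝ) ≤ 1 + CA)
        nlinarith [mul_le_mul_of_nonneg_left (h.trans h2) hk.le]
      -- assemble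
      have htri : ‖α' (Q δ - k • P (L (u m)) - Aop (Q δ)) - Bop (Q δ)‖ ≤
          ‖L'inv (P ρ)‖ + k * ‖Q (L (u m)) - P (L (u m))‖ + ‖Aop (Q δ)‖ + ‖Bop (Q δ)‖ := by
        have hcon := resolvent_contract Aop α' hdA hα2' (Q δ - k • P (L (u m)) - Aop (Q δ))
        have hX : ‖Q δ - k • P (L (u m))‖ ≤
            ‖L'inv (P ρ)‖ + k * ‖Q (L (u m)) - P (L (u m))‖ := by
          rw [hXdec]
          calc ‖L'inv (P ρ) + k • (Q (L (u m)) - P (L (u m)))‖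
              ≤ ‖L'inv (P ρ)‖ + ‖k • (Q (L (u m)) - P (L (u m)))‖ := norm_add_le _ _
            _ = ‖L'inv (P ρ)‖ + k * ‖Q (L (u m)) - P (L (u m))‖ := by
                rw [norm_smul, Real.norm_eq_abs, abs_of_nonneg hk.le]
        calc ‖α' (Q δ - k • P (L (u m)) - Aop (Q δ)) - Bop (Q δ)‖
            ≤ ‖α' (Q δ - k • P (L (u m)) - Aop (Q δ))‖ + ‖Bop (Q δ)‖ := norm_sub_le _ _
          _ ≤ ‖Q δ - k • P (L (u m)) - Aop (Q δ)‖ + ‖Bop (Q δ)‖ := by linarith [hcon]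
          _ ≤ (‖Q δ - k • P (L (u m))‖ + ‖Aop (Q δ)‖) + ‖Bop (Q δ)‖ := by
              linarith [norm_sub_le (Q δ - k • P (L (u m))) (Aop (Q δ))]
          _ ≤ _ := by linarith [hX]
      refine htri.trans ?_
      rw [hDddef]
      have harith : CL * C₂ * ((2 * k ^ 2 + 2 * ε * k) * Z) + k * (2 * C₂ * ε * Z) +
          3 * CA * C₂ * (k * (k * Z)) + 3 * (1 + CA) * C₂ * (k * (k * Z)) ≤
          C₂ * (2*CL + 6*CA + 5) * ((k ^ 2 + ε * k) * Z) := by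
        have h1 : 0 ≤ k ^ 2 * Z := by positivity
        have h2 : 0 ≤ ε * k * Z := by positivity
        nlinarith [mul_nonneg (mul_nonneg hC₂.le hCA.le) h1,
          mul_nonneg (mul_nonneg hC₂.le hCA.le) h2,
          mul_nonneg (mul_nonneg hC₂.le hCL.le) h2,
          mul_nonneg hC₂.le h1, mul_nonneg hC₂.le h2,
          mul_nonneg (mul_nonneg hC₂.le hε) h1]
      linarith [hb1, hb3, hb4, mul_le_mul_of_nonneg_left hb2 hk.le]
    -- accumulation
    have hacc : ∀ m : ℕ, ‖(1 - Bop) (Q (u m) - (S' ^ m) (Q (u 0)))‖ ≤ m * Dd := by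
      intro m
      induction m with
      | zero => simp
      | succ m ih =>
        have hsplit : Q (u (m + 1)) - (S' ^ (m + 1)) (Q (u 0)) =
            (Q (u (m + 1)) - S' (Q (u m))) + S' (Q (u m) - (S' ^ m) (Q (u 0))) := by
          have hp : (S' ^ (m + 1)) (Q (u 0)) = S' ((S' ^ m) (Q (u 0))) := by
            rw [pow_succ']
            simp [ContinuousLinearMap.mul_apply]
          rw [hp, map_sub]
          abel
        rw [hsplit, map_add]
        have h2 : ‖(1 - Bop) (S' (Q (u m) - (S' ^ m) (Q (u 0))))‖ ≤
            ‖(1 - Bop) (Q (u m) - (S' ^ m) (Q (u 0)))‖ := by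
          rw [hBS]
          exact hstab _
        calc ‖(1 - Bop) (Q (u (m + 1)) - S' (Q (u m))) +
              (1 - Bop) (S' (Q (u m) - (S' ^ m) (Q (u 0))))‖
            ≤ ‖(1 - Bop) (Q (u (m + 1)) - S' (Q (u m)))‖ +
              ‖(1 - Bop) (S' (Q (u m) - (S' ^ m) (Q (u 0))))‖ := norm_add_le _ _
          _ ≤ Dd + m * Dd := by linarith [hstep m, ih, h2]
          _ = (m + 1 : ℕ) * Dd := by push_cast; ring
    have hDd0 : 0 ≤ Dd := by
      rw [hDddef]
      positivity
    have hGn : ‖Q (u n) - (S' ^ n) (Q (u 0))‖ ≤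
        C₂ * (2*CL + 6*CA + 5) * T * ((k + ε) * Z) := by
      refine ((hres _).trans (hacc n)).trans ?_
      rw [hDddef]
      have h1 : (n : ℝ) * (C₂ * (2*CL + 6*CA + 5) * ((k ^ 2 + ε * k) * Z)) =
          C₂ * (2*CL + 6*CA + 5) * ((n : ℝ) * k) * ((k + ε) * Z) := by
        ring
      rw [h1]
      have h2 : 0 ≤ (k + ε) * Z := by positivity
      have h3 : 0 ≤ C₂ * (2*CL + 6*CA + 5) := by positivity
      nlinarith [mul_le_mul_of_nonneg_right (mul_le_mul_of_nonneg_left hnk h3) h2]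
    -- final assembly
    have hsplit2 : u n - J ((S' ^ n) (Q η)) =
        (u n - J (Q (u n))) + J (Q (u n) - (S' ^ n) (Q (u 0))) := by
      rw [map_sub, hu0]
      abel
    have hJG : ‖J (Q (u n) - (S' ^ n) (Q (u 0)))‖ ≤
        (1 / C₁) * (C₂ * (2*CL + 6*CA + 5) * T * ((k + ε) * Z)) := by
      refine (hJle _).trans ?_
      have h1 : 0 ≤ 1 / C₁ := by positivity
      exact mul_le_mul_of_nonneg_left hGn h1
    calc ‖u n - J ((S' ^ n) (Q η))‖
        ≤ ‖u n - J (Q (u n))‖ + ‖J (Q (u n) - (S' ^ n) (Q (u 0)))‖ := by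
          rw [hsplit2]; exact norm_add_le _ _
      _ ≤ ε * (‖L η‖ + ‖L (L η)‖) +
          (1 / C₁) * (C₂ * (2*CL + 6*CA + 5) * T * ((k + ε) * Z)) :=
          add_le_add (hterm1 n) hJG
      _ ≤ (1 + C₂ * (2*CL + 6*CA + 5) * T / C₁ + (1 + 3 * C₂ / C₁ * (2*CL + T*(1+CA)))) *
          (ε + k) * Z := by
          have hz12 : ‖L η‖ + ‖L (L η)‖ ≤ Z := by rw [hZdef]; linarith
          have he1 : ε * (‖L η‖ + ‖L (L η)‖) ≤ ε * Z := mul_le_mul_of_nonneg_left hz12 hε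
          have hεkZ : ε * Z ≤ (ε + k) * Z := by nlinarith [mul_nonneg hk.le hZ]
          have hexp : (1 + C₂ * (2*CL + 6*CA + 5) * T / C₁ +
              (1 + 3 * C₂ / C₁ * (2*CL + T*(1+CA)))) * (ε + k) * Z =
              (ε + k) * Z + (1 / C₁) * (C₂ * (2*CL + 6*CA + 5) * T * ((k + ε) * Z)) +
              (1 + 3 * C₂ / C₁ * (2*CL + T*(1+CA))) * ((ε + k) * Z) := by
            field_simp
            ring
          rw [hexp]
          have hc1pos : 0 ≤ (1 + 3 * C₂ / C₁ * (2*CL + T*(1+CA))) * ((ε + k) * Z) := by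
            positivity
          linarith [he1, hεkZ, hc1pos]
  · -- crude branch : ε > 1
    push_neg at hε1
    have hz12 : ‖L η‖ + ‖L (L η)‖ ≤ Z := by rw [hZdef]; linarith
    have hz1 : ‖L η‖ ≤ Z := by rw [hZdef]; linarith
    rcases Nat.eq_zero_or_pos n with hn0 | hnpos
    · subst hn0
      have h0 : (S' ^ 0) (Q η) = Q η := by simp
      rw [h0, ← hu0]
      refine (hterm1 0).trans ?_
      have hC1 : (0:ℝ) ≤ C₂ * (2*CL + 6*CA + 5) * T / C₁ + 3 * C₂ / C₁ * (2*CL + T*(1+CA)) := by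
        positivity
      nlinarith [mul_nonneg hε hZ, mul_nonneg hε (mul_nonneg hk.le hZ),
        mul_le_mul_of_nonneg_left hz12 hε, mul_nonneg hk.le hZ,
        mul_nonneg hC1 (mul_nonneg (by linarith : (0:ℝ) ≤ ε + k) hZ)]
    · have hkT : k ≤ T := by
        have h1 : (1 : ℝ) ≤ (n : ℝ) := by exact_mod_cast hnpos
        nlinarith
      have hPLη : ‖P (L η)‖ ≤ 3 * C₂ * ε * Z := by
        have h := hPle (L η)
        nlinarith [mul_le_mul_of_nonneg_left hz1 hC₂.le,
          mul_le_mul_of_nonneg_left hz12 (mul_nonneg hC₂.le hε),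
          mul_nonneg hC₂.le hZ, hε1]
      have hηb : ‖η‖ ≤ (1 / C₁) * (CL * (3 * C₂ * ε * Z)) + ε * Z := by
        have h1 : ‖η - J (Q η)‖ ≤ ε * Z := by
          rw [← hu0]
          refine (hterm1 0).trans ?_
          exact mul_le_mul_of_nonneg_left hz12 hε
        have h2 : ‖J (Q η)‖ ≤ (1 / C₁) * (CL * (3 * C₂ * ε * Z)) := by
          refine (hJle _).trans ?_
          have h3 : ‖Q η‖ ≤ CL * (3 * C₂ * ε * Z) := by
            rw [hQv]
            exact (hL'invle _).trans (mul_le_mul_of_nonneg_left hPLη hCL.le)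
          exact mul_le_mul_of_nonneg_left h3 (by positivity)
        calc ‖η‖ = ‖J (Q η) + (η - J (Q η))‖ := by congr 1; abel
          _ ≤ ‖J (Q η)‖ + ‖η - J (Q η)‖ := norm_add_le _ _
          _ ≤ _ := add_le_add h2 h1
      have hSn : ‖J ((S' ^ n) (Q η))‖ ≤
          (1 / C₁) * ((CL + T * (1 + CA)) * (3 * C₂ * ε * Z)) := by
        refine (hJle _).trans ?_
        have h1 : ‖(S' ^ n) (Q η)‖ ≤ ‖(1 - Bop) (Q η)‖ := (hres _).trans (hpow n (Q η))
        have h2 : ‖(1 - Bop) (Q η)‖ ≤ (CL + T * (1 + CA)) * (3 * C₂ * ε * Z) := by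
          have heq : (1 - Bop) (Q η) = Q η - k • B' (Q η) := by
            rw [hBopdef]
            rfl
          rw [heq]
          have h3 : ‖Q η‖ ≤ CL * ‖P (L η)‖ := by
            rw [hQv]; exact hL'invle _
          have h4 : ‖B' (Q η)‖ ≤ (1 + CA) * ‖P (L η)‖ := by
            rw [hQv]; exact hBLle _
          calc ‖Q η - k • B' (Q η)‖ ≤ ‖Q η‖ + ‖k • B' (Q η)‖ := norm_sub_le _ _
            _ = ‖Q η‖ + k * ‖B' (Q η)‖ := by
                rw [norm_smul, Real.norm_eq_abs, abs_of_nonneg hk.le]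
            _ ≤ CL * ‖P (L η)‖ + T * ((1 + CA) * ‖P (L η)‖) := by
                have h5 := mul_le_mul_of_nonneg_left h4 hk.le
                have h6 : k * ((1 + CA) * ‖P (L η)‖) ≤ T * ((1 + CA) * ‖P (L η)‖) := by
                  have h7 : 0 ≤ (1 + CA) * ‖P (L η)‖ := by positivity
                  nlinarith
                linarith [h3]
            _ ≤ (CL + T * (1 + CA)) * (3 * C₂ * ε * Z) := by
                nlinarith [hPLη, mul_le_mul_of_nonneg_left hPLη hCL.le,
                  mul_le_mul_of_nonneg_left hPLη
                    (by positivity : (0:ℝ) ≤ T * (1 + CA))]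
        exact mul_le_mul_of_nonneg_left (h1.trans h2) (by positivity)
      have hexpb : ‖u n‖ ≤ ‖η‖ := by
        rw [hudef]
        exact exp_contraction L hL (hmk n) η
      calc ‖u n - J ((S' ^ n) (Q η))‖ ≤ ‖u n‖ + ‖J ((S' ^ n) (Q η))‖ := norm_sub_le _ _
        _ ≤ ((1 / C₁) * (CL * (3 * C₂ * ε * Z)) + ε * Z) +
            (1 / C₁) * ((CL + T * (1 + CA)) * (3 * C₂ * ε * Z)) := by
            linarith [hexpb.trans hηb, hSn]
        _ ≤ (1 + C₂ * (2*CL + 6*CA + 5) * T / C₁ + (1 + 3 * C₂ / C₁ * (2*CL + T*(1+CA)))) *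
            (ε + k) * Z := by
            have key : (1 / C₁) * (CL * (3 * C₂ * ε * Z)) + ε * Z +
                (1 / C₁) * ((CL + T * (1 + CA)) * (3 * C₂ * ε * Z)) =
                (1 + 3 * C₂ / C₁ * (2*CL + T*(1+CA))) * (ε * Z) := by
              field_simp
              ring
            rw [key]
            have hexp : (1 + C₂ * (2*CL + 6*CA + 5) * T / C₁ +
                (1 + 3 * C₂ / C₁ * (2*CL + T*(1+CA)))) * (ε + k) * Z =
                (1 + C₂ * (2*CL + 6*CA + 5) * T / C₁) * ((ε + k) * Z) +
                (1 + 3 * C₂ / C₁ * (2*CL + T*(1+CA))) * ((ε + k) * Z) := by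
              ring
            rw [hexp]
            have h3 : ε * Z ≤ (ε + k) * Z := by nlinarith [mul_nonneg hk.le hZ]
            have h4 : (1 + 3 * C₂ / C₁ * (2*CL + T*(1+CA))) * (ε * Z) ≤
                (1 + 3 * C₂ / C₁ * (2*CL + T*(1+CA))) * ((ε + k) * Z) :=
              mul_le_mul_of_nonneg_left h3 (by positivity)
            have h5 : 0 ≤ (1 + C₂ * (2*CL + 6*CA + 5) * T / C₁) * ((ε + k) * Z) := by
              positivity
            linarith
end

section
/- Let N, M ≥ 1, let D₁ be a real diagonal N×N matrix with diagonal entries in [a₀, a₁] and D₂ a real diagonal M×M matrix with diagonal entries in [b₀, b₁], where 0 < a₀ ≤ a₁ and 0 < b₀ ≤ b₁. Let K₁ be a symmetric positive definite real N×N matrix and K₂ a symmetric positive definite real M×M matrix. Set K_A = K₁ ⊗ D₂ and K_B = D₁ ⊗ K₂ (Kronecker products, of size NM × NM). Then K_A + K_B is invertible and ‖K_A (K_A + K_B)⁻¹‖₂ ≤ √((a₁ b₁)/(a₀ b₀)), where ‖·‖₂ denotes the operator norm on matrices induced by the Euclidean norm. -/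
open Matrix
open scoped Kronecker

/-- Kronecker product of real PSD matrices is PSD. -/
lemma aux_posSemidef_kron {n₁ n₂ : Type*} [Fintype n₁] [Fintype n₂] [DecidableEq n₁]
    [DecidableEq n₂] {A : Matrix n₁ n₁ ℝ} {B : Matrix n₂ n₂ ℝ}
    (hA : A.PosSemidef) (hB : B.PosSemidef) : (A ⊗ₖ B).PosSemidef := by
  exact hA.kronecker hB

/-- Operator-norm bound via the quadratic form. -/
lemma aux_norm_clm_le {n : Type*} [Fintype n] [DecidableEq n] (A : Matrix n n ℝ) (c : ℝ)
    (hc : 0 ≤ c) (h : ∀ z : n → ℝ, ∑ i, (A.mulVec z i) ^ 2 ≤ c ^ 2 * ∑ i, (z i) ^ 2) :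
    ‖Matrix.toEuclideanCLM (𝕜 := ℝ) A‖ ≤ c := by
  refine ContinuousLinearMap.opNorm_le_bound _ hc fun x => ?_
  set z : n → ℝ := WithLp.equiv 2 (n → ℝ) x with hz
  have hx : x = (WithLp.equiv 2 (n → ℝ)).symm z := by simp [hz]
  have norm_eq : ∀ v : n → ℝ,
      ‖(WithLp.equiv 2 (n → ℝ)).symm v‖ = Real.sqrt (∑ i, (v i) ^ 2) := by
    intro v
    rw [EuclideanSpace.norm_eq]
    simp
  rw [hx, show Matrix.toEuclideanCLM (𝕜 := ℝ) A ((WithLp.equiv 2 (n → ℝ)).symm z) =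
      (WithLp.equiv 2 (n → ℝ)).symm (A *ᵥ z) from rfl, norm_eq, norm_eq]
  calc Real.sqrt (∑ i, (A.mulVec z i) ^ 2) ≤ Real.sqrt (c ^ 2 * ∑ i, (z i) ^ 2) :=
        Real.sqrt_le_sqrt (h z)
    _ = c * Real.sqrt (∑ i, (z i) ^ 2) := by
        rw [Real.sqrt_mul (sq_nonneg c), Real.sqrt_sq hc]

lemma aux_norm_clm_diagonal_le {n : Type*} [Fintype n] [DecidableEq n] (v : n → ℝ) (c : ℝ)
    (hc : 0 ≤ c) (h : ∀ i, |v i| ≤ c) :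
    ‖Matrix.toEuclideanCLM (𝕜 := ℝ) (Matrix.diagonal v)‖ ≤ c := by
  refine aux_norm_clm_le _ c hc fun z => ?_
  rw [Finset.mul_sum]
  refine Finset.sum_le_sum fun i _ => ?_
  rw [Matrix.mulVec_diagonal, mul_pow]
  have h1 : (v i) ^ 2 ≤ c ^ 2 := by
    rw [← sq_abs (v i)]
    exact pow_le_pow_left₀ (abs_nonneg _) (h i) 2
  exact mul_le_mul_of_nonneg_right h1 (sq_nonneg _)

/-- The contraction bound `‖A (A + B)⁻¹‖ ≤ 1`. -/
lemma aux_contraction {n : Type*} [Fintype n] [DecidableEq n] (A B : Matrix n n ℝ)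
    (hA : A.IsHermitian) (hAB : (A * B).PosSemidef) (hdet : IsUnit (A + B).det) :
    ‖Matrix.toEuclideanCLM (𝕜 := ℝ) (A * (A + B)⁻¹)‖ ≤ 1 := by
  refine aux_norm_clm_le _ 1 zero_le_one fun z => ?_
  rw [one_pow, one_mul]
  set y := (A + B)⁻¹.mulVec z with hy
  have hz : z = (A + B).mulVec y := by
    rw [hy, Matrix.mulVec_mulVec, Matrix.mul_nonsing_inv _ hdet, Matrix.one_mulVec]
  have hmv : (A * (A + B)⁻¹).mulVec z = A.mulVec y := by
    rw [hy, Matrix.mulVec_mulVec]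
  rw [hmv]
  conv_rhs => rw [hz]
  -- translate to dot products
  have sum_sq : ∀ w : n → ℝ, ∑ i, (w i) ^ 2 = w ⬝ᵥ w := by
    intro w; simp [dotProduct, pow_two]
  rw [sum_sq, sum_sq]
  have hcross : A.mulVec y ⬝ᵥ B.mulVec y = y ⬝ᵥ (A * B).mulVec y := by
    rw [← Matrix.mulVec_mulVec, Matrix.dotProduct_mulVec y, ← Matrix.mulVec_transpose]
    have hAt : Aᵀ = A := by
      ext i j
      rw [Matrix.transpose_apply]
      have h := congrFun (congrFun hA.eq i) j
      simpa [Matrix.conjTranspose_apply] using h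
    rw [hAt]
  have h1 : 0 ≤ y ⬝ᵥ (A * B).mulVec y := by
    have := hAB.dotProduct_mulVec_nonneg y
    simpa using this
  have h2 : 0 ≤ B.mulVec y ⬝ᵥ B.mulVec y := by
    apply Finset.sum_nonneg
    intro i _
    exact mul_self_nonneg _
  rw [Matrix.add_mulVec, dotProduct_add, add_dotProduct, add_dotProduct]
  have h3 : B.mulVec y ⬝ᵥ A.mulVec y = A.mulVec y ⬝ᵥ B.mulVec y := dotProduct_comm _ _
  rw [h3, hcross]
  linarith

/-- Let `D₁`, `D₂` be diagonal matrices with diagonal entries in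
`[a₀, a₁]` and `[b₀, b₁]` respectively (`0 < a₀ ≤ a₁`, `0 < b₀ ≤ b₁`), and let
`K₁`, `K₂` be symmetric positive definite. With `K_A = K₁ ⊗ D₂` and
`K_B = D₁ ⊗ K₂`, the matrix `K_A + K_B` is invertible and
`‖K_A (K_A + K_B)⁻¹‖₂ ≤ √((a₁ b₁)/(a₀ b₀))` in the Euclidean operator norm. -/
theorem kronecker_stability_bound
    (N M : ℕ) (hN : 1 ≤ N) (hM : 1 ≤ M)
    (a₀ a₁ b₀ b₁ : ℝ) (ha₀ : 0 < a₀) (ha : a₀ ≤ a₁) (hb₀ : 0 < b₀) (hb : b₀ ≤ b₁)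
    (d₁ : Fin N → ℝ) (hd₁ : ∀ i, d₁ i ∈ Set.Icc a₀ a₁)
    (d₂ : Fin M → ℝ) (hd₂ : ∀ j, d₂ j ∈ Set.Icc b₀ b₁)
    (K₁ : Matrix (Fin N) (Fin N) ℝ) (hK₁ : K₁.PosDef)
    (K₂ : Matrix (Fin M) (Fin M) ℝ) (hK₂ : K₂.PosDef)
    (KA KB : Matrix (Fin N × Fin M) (Fin N × Fin M) ℝ)
    (hKA : KA = K₁ ⊗ₖ Matrix.diagonal d₂)
    (hKB : KB = Matrix.diagonal d₁ ⊗ₖ K₂) :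
    IsUnit (KA + KB) ∧
      ‖Matrix.toEuclideanCLM (𝕜 := ℝ) (KA * (KA + KB)⁻¹)‖ ≤
        Real.sqrt ((a₁ * b₁) / (a₀ * b₀)) := by
  have hd₁pos : ∀ i, 0 < d₁ i := fun i => lt_of_lt_of_le ha₀ (hd₁ i).1
  have hd₂pos : ∀ j, 0 < d₂ j := fun j => lt_of_lt_of_le hb₀ (hd₂ j).1
  set S := KA + KB with hS
  -- positive semidefiniteness
  have hKA_psd : KA.PosSemidef := by
    rw [hKA]
    exact aux_posSemidef_kron hK₁.posSemidef
      (Matrix.PosSemidef.diagonal fun j => (hd₂pos j).le)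
  have hKB_psd : KB.PosSemidef := by
    rw [hKB]
    exact aux_posSemidef_kron (Matrix.PosSemidef.diagonal fun i => (hd₁pos i).le)
      hK₂.posSemidef
  have hKB_det : KB.det ≠ 0 := by
    rw [hKB, Matrix.det_kronecker, Matrix.det_diagonal]
    have h1 : (∏ i, d₁ i) ≠ 0 := (Finset.prod_pos fun i _ => hd₁pos i).ne'
    exact mul_ne_zero (pow_ne_zero _ h1) (pow_ne_zero _ hK₂.det_pos.ne')
  -- invertibility of S
  have hS_unit : IsUnit S := by
    rw [Matrix.isUnit_iff_isUnit_det, isUnit_iff_ne_zero]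
    intro h0
    obtain ⟨v, hv0, hv⟩ := Matrix.exists_mulVec_eq_zero_iff.mpr h0
    have h1 : 0 ≤ v ⬝ᵥ KA.mulVec v := by simpa using hKA_psd.dotProduct_mulVec_nonneg v
    have h2 : 0 ≤ v ⬝ᵥ KB.mulVec v := by simpa using hKB_psd.dotProduct_mulVec_nonneg v
    have hsum : v ⬝ᵥ KA.mulVec v + v ⬝ᵥ KB.mulVec v = 0 := by
      have : v ⬝ᵥ S.mulVec v = 0 := by rw [hv]; simp
      rw [hS, Matrix.add_mulVec, dotProduct_add] at this
      exact this
    have h2' : v ⬝ᵥ KB.mulVec v = 0 := by linarith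
    have hker : KB.mulVec v = 0 := by
      have := (hKB_psd.dotProduct_mulVec_zero_iff v).mp (by simpa using h2')
      exact this
    exact hKB_det (Matrix.exists_mulVec_eq_zero_iff.mp ⟨v, hv0, hker⟩)
  have hSdet : IsUnit S.det := (Matrix.isUnit_iff_isUnit_det S).mp hS_unit
  refine ⟨hS_unit, ?_⟩
  -- scaling matrices
  set s₁ : Fin N → ℝ := fun i => Real.sqrt (d₁ i) with hs₁
  set s₂ : Fin M → ℝ := fun j => Real.sqrt (d₂ j) with hs₂
  have hs₁pos : ∀ i, 0 < s₁ i := fun i => Real.sqrt_pos.mpr (hd₁pos i)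
  have hs₂pos : ∀ j, 0 < s₂ j := fun j => Real.sqrt_pos.mpr (hd₂pos j)
  set E₁ : Matrix (Fin N) (Fin N) ℝ := Matrix.diagonal s₁ with hE₁
  set E₂ : Matrix (Fin M) (Fin M) ℝ := Matrix.diagonal s₂ with hE₂
  set F₁ : Matrix (Fin N) (Fin N) ℝ := Matrix.diagonal (fun i => (s₁ i)⁻¹) with hF₁
  set F₂ : Matrix (Fin M) (Fin M) ℝ := Matrix.diagonal (fun j => (s₂ j)⁻¹) with hF₂
  set E : Matrix (Fin N × Fin M) (Fin N × Fin M) ℝ := E₁ ⊗ₖ E₂ with hE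
  set F : Matrix (Fin N × Fin M) (Fin N × Fin M) ℝ := F₁ ⊗ₖ F₂ with hF
  have hF₁E₁ : F₁ * E₁ = 1 := by
    rw [hF₁, hE₁, Matrix.diagonal_mul_diagonal]
    have h : (fun i => (s₁ i)⁻¹ * s₁ i) = fun _ => (1 : ℝ) :=
      funext fun i => inv_mul_cancel₀ (hs₁pos i).ne'
    rw [h, Matrix.diagonal_one]
  have hE₁F₁ : E₁ * F₁ = 1 := by
    rw [hF₁, hE₁, Matrix.diagonal_mul_diagonal]
    have h : (fun i => s₁ i * (s₁ i)⁻¹) = fun _ => (1 : ℝ) :=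
      funext fun i => mul_inv_cancel₀ (hs₁pos i).ne'
    rw [h, Matrix.diagonal_one]
  have hF₂E₂ : F₂ * E₂ = 1 := by
    rw [hF₂, hE₂, Matrix.diagonal_mul_diagonal]
    have h : (fun j => (s₂ j)⁻¹ * s₂ j) = fun _ => (1 : ℝ) :=
      funext fun j => inv_mul_cancel₀ (hs₂pos j).ne'
    rw [h, Matrix.diagonal_one]
  have hE₂F₂ : E₂ * F₂ = 1 := by
    rw [hF₂, hE₂, Matrix.diagonal_mul_diagonal]
    have h : (fun j => s₂ j * (s₂ j)⁻¹) = fun _ => (1 : ℝ) :=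
      funext fun j => mul_inv_cancel₀ (hs₂pos j).ne'
    rw [h, Matrix.diagonal_one]
  have hFE : F * E = 1 := by
    rw [hF, hE, ← Matrix.mul_kronecker_mul, hF₁E₁, hF₂E₂, Matrix.one_kronecker_one]
  have hEF : E * F = 1 := by
    rw [hF, hE, ← Matrix.mul_kronecker_mul, hE₁F₁, hE₂F₂, Matrix.one_kronecker_one]
  -- scaled matrices
  set Kh₁ : Matrix (Fin N) (Fin N) ℝ := F₁ * K₁ * F₁ with hKh₁
  set Kh₂ : Matrix (Fin M) (Fin M) ℝ := F₂ * K₂ * F₂ with hKh₂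
  have hF₂D₂F₂ : F₂ * Matrix.diagonal d₂ * F₂ = 1 := by
    rw [hF₂, Matrix.diagonal_mul_diagonal, Matrix.diagonal_mul_diagonal]
    have h : (fun j => (s₂ j)⁻¹ * d₂ j * (s₂ j)⁻¹) = fun _ => (1 : ℝ) := by
      funext j
      have hmul : s₂ j * s₂ j = d₂ j := Real.mul_self_sqrt (hd₂pos j).le
      show (s₂ j)⁻¹ * d₂ j * (s₂ j)⁻¹ = 1
      rw [← hmul]
      field_simp [(hs₂pos j).ne']
    rw [h, Matrix.diagonal_one]
  have hF₁D₁F₁ : F₁ * Matrix.diagonal d₁ * F₁ = 1 := by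
    rw [hF₁, Matrix.diagonal_mul_diagonal, Matrix.diagonal_mul_diagonal]
    have h : (fun i => (s₁ i)⁻¹ * d₁ i * (s₁ i)⁻¹) = fun _ => (1 : ℝ) := by
      funext i
      have hmul : s₁ i * s₁ i = d₁ i := Real.mul_self_sqrt (hd₁pos i).le
      show (s₁ i)⁻¹ * d₁ i * (s₁ i)⁻¹ = 1
      rw [← hmul]
      field_simp [(hs₁pos i).ne']
    rw [h, Matrix.diagonal_one]
  have hAhat : F * KA * F = Kh₁ ⊗ₖ (1 : Matrix (Fin M) (Fin M) ℝ) := by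
    rw [hKA, hF, ← Matrix.mul_kronecker_mul, ← Matrix.mul_kronecker_mul, hF₂D₂F₂]
  have hBhat : F * KB * F = (1 : Matrix (Fin N) (Fin N) ℝ) ⊗ₖ Kh₂ := by
    rw [hKB, hF, ← Matrix.mul_kronecker_mul, ← Matrix.mul_kronecker_mul, hF₁D₁F₁]
  set Ah : Matrix (Fin N × Fin M) (Fin N × Fin M) ℝ := Kh₁ ⊗ₖ 1 with hAh
  set Bh : Matrix (Fin N × Fin M) (Fin N × Fin M) ℝ := 1 ⊗ₖ Kh₂ with hBh
  have hsumhat : Ah + Bh = F * S * F := by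
    rw [hS, Matrix.mul_add, Matrix.add_mul, hAhat, hBhat]
  -- proof that diagonal matrices are self conjTranspose (real)
  have hdiag_ct : ∀ {k : Type} [Fintype k] [DecidableEq k] (v : k → ℝ),
      (Matrix.diagonal v)ᴴ = Matrix.diagonal v := by
    intro k _ _ v
    rw [Matrix.diagonal_conjTranspose, star_trivial]
  -- PSD of scaled pieces
  have hKh₁_psd : Kh₁.PosSemidef := by
    have := hK₁.posSemidef.conjTranspose_mul_mul_same F₁
    rwa [hdiag_ct] at this
  have hKh₂_psd : Kh₂.PosSemidef := by
    have := hK₂.posSemidef.conjTranspose_mul_mul_same F₂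
    rwa [hdiag_ct] at this
  have hAhBh_psd : (Ah * Bh).PosSemidef := by
    rw [hAh, hBh, ← Matrix.mul_kronecker_mul, Matrix.mul_one, Matrix.one_mul]
    exact aux_posSemidef_kron hKh₁_psd hKh₂_psd
  have hAh_herm : Ah.IsHermitian :=
    (aux_posSemidef_kron hKh₁_psd Matrix.PosSemidef.one).1
  -- determinant of F
  have hFdet : IsUnit F.det := by
    have : F.det * E.det = 1 := by rw [← Matrix.det_mul, hFE, Matrix.det_one]
    exact IsUnit.of_mul_eq_one _ this
  have hhat_det : IsUnit (Ah + Bh).det := by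
    rw [hsumhat, Matrix.det_mul, Matrix.det_mul]
    exact (hFdet.mul hSdet).mul hFdet
  -- the similarity identity
  have hinv : (Ah + Bh)⁻¹ = E * S⁻¹ * E := by
    apply Matrix.inv_eq_right_inv
    rw [hsumhat]
    calc F * S * F * (E * S⁻¹ * E) = F * S * (F * E) * S⁻¹ * E := by
          simp only [Matrix.mul_assoc]
      _ = F * (S * S⁻¹) * E := by rw [hFE, Matrix.mul_one]; simp only [Matrix.mul_assoc]
      _ = F * E := by rw [Matrix.mul_nonsing_inv _ hSdet, Matrix.mul_one]
      _ = 1 := hFE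
  have hid : KA * S⁻¹ = E * (Ah * (Ah + Bh)⁻¹) * F := by
    rw [hinv, ← hAhat]
    symm
    calc E * (F * KA * F * (E * S⁻¹ * E)) * F
        = (E * F) * (KA * ((F * E) * (S⁻¹ * (E * F)))) := by simp only [Matrix.mul_assoc]
      _ = KA * S⁻¹ := by rw [hEF, hFE, Matrix.one_mul, Matrix.mul_one, Matrix.one_mul]
  rw [hid, _root_.map_mul, _root_.map_mul]
  -- norm bounds for the diagonal factors
  have hE_diag : E = Matrix.diagonal (fun p : Fin N × Fin M => s₁ p.1 * s₂ p.2) := by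
    rw [hE, hE₁, hE₂, Matrix.diagonal_kronecker_diagonal]
  have hF_diag : F = Matrix.diagonal (fun p : Fin N × Fin M => (s₁ p.1)⁻¹ * (s₂ p.2)⁻¹) := by
    rw [hF, hF₁, hF₂, Matrix.diagonal_kronecker_diagonal]
  have hnormE : ‖Matrix.toEuclideanCLM (𝕜 := ℝ) E‖ ≤ Real.sqrt (a₁ * b₁) := by
    rw [hE_diag]
    apply aux_norm_clm_diagonal_le _ _ (Real.sqrt_nonneg _)
    intro ⟨i, j⟩
    have h1 : 0 ≤ s₁ i * s₂ j := mul_nonneg (hs₁pos i).le (hs₂pos j).le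
    rw [abs_of_nonneg h1]
    show Real.sqrt (d₁ i) * Real.sqrt (d₂ j) ≤ Real.sqrt (a₁ * b₁)
    rw [← Real.sqrt_mul (hd₁pos i).le]
    exact Real.sqrt_le_sqrt (mul_le_mul (hd₁ i).2 (hd₂ j).2 (hd₂pos j).le (ha₀.le.trans ha))
  have hnormF : ‖Matrix.toEuclideanCLM (𝕜 := ℝ) F‖ ≤ (Real.sqrt (a₀ * b₀))⁻¹ := by
    rw [hF_diag]
    apply aux_norm_clm_diagonal_le _ _ (inv_nonneg.mpr (Real.sqrt_nonneg _))
    intro ⟨i, j⟩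
    have h1 : 0 < s₁ i * s₂ j := mul_pos (hs₁pos i) (hs₂pos j)
    rw [← mul_inv, abs_of_nonneg (inv_nonneg.mpr h1.le)]
    rw [inv_le_inv₀ h1 (Real.sqrt_pos.mpr (mul_pos ha₀ hb₀))]
    show Real.sqrt (a₀ * b₀) ≤ Real.sqrt (d₁ i) * Real.sqrt (d₂ j)
    rw [← Real.sqrt_mul (hd₁pos i).le]
    exact Real.sqrt_le_sqrt (mul_le_mul (hd₁ i).1 (hd₂ j).1 hb₀.le (hd₁pos i).le)
  have hnormT : ‖Matrix.toEuclideanCLM (𝕜 := ℝ) (Ah * (Ah + Bh)⁻¹)‖ ≤ 1 :=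
    aux_contraction Ah Bh hAh_herm hAhBh_psd hhat_det
  calc ‖Matrix.toEuclideanCLM (𝕜 := ℝ) E * Matrix.toEuclideanCLM (𝕜 := ℝ) (Ah * (Ah + Bh)⁻¹) *
        Matrix.toEuclideanCLM (𝕜 := ℝ) F‖
      ≤ ‖Matrix.toEuclideanCLM (𝕜 := ℝ) E‖ * ‖Matrix.toEuclideanCLM (𝕜 := ℝ) (Ah * (Ah + Bh)⁻¹)‖ *
        ‖Matrix.toEuclideanCLM (𝕜 := ℝ) F‖ :=
        le_trans (norm_mul_le _ _) (by gcongr; exact norm_mul_le _ _)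
    _ ≤ Real.sqrt (a₁ * b₁) * 1 * (Real.sqrt (a₀ * b₀))⁻¹ := by
        refine mul_le_mul (mul_le_mul hnormE hnormT (norm_nonneg _) (Real.sqrt_nonneg _))
          hnormF (norm_nonneg _) (by positivity)
    _ = Real.sqrt ((a₁ * b₁) / (a₀ * b₀)) := by
        rw [mul_one, Real.sqrt_div (mul_nonneg (ha₀.le.trans ha) (hb₀.le.trans hb)), div_eq_mul_inv]
end

section
/- Let N, M ≥ 1, let D₁ be a real diagonal N×N matrix with strictly positive diagonal entries and D₂ a real diagonal M×M matrix with strictly positive diagonal entries, let K₁ be an invertible real N×N matrix and K₂ a real M×M matrix. Let D₁^{1/2}, D₂^{1/2} denote the entrywise square roots of D₁, D₂ and D^{1/2} = D₁^{1/2} ⊗ D₂^{1/2}. Then I + (D₁ K₁⁻¹) ⊗ (K₂ D₂⁻¹) = D^{1/2} · (I + (D₁^{-1/2} K₁ D₁^{-1/2})⁻¹ ⊗ (D₂^{-1/2} K₂ D₂^{-1/2})) · (D^{1/2})⁻¹. Moreover, if additionally K₁ ⊗ D₂ and (K₁ ⊗ D₂) + (D₁ ⊗ K₂) are invertible, then (K₁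 ⊗ D₂)((K₁ ⊗ D₂) + (D₁ ⊗ K₂))⁻¹ = (I + (D₁ K₁⁻¹) ⊗ (K₂ D₂⁻¹))⁻¹ whenever the latter inverse exists. -/
open Matrix
open scoped Kronecker

/-- Kronecker-product similarity identities: with entrywise
square roots `D₁^{1/2}`, `D₂^{1/2}` and `D^{1/2} = D₁^{1/2} ⊗ D₂^{1/2}`,
`I + (D₁K₁⁻¹) ⊗ (K₂D₂⁻¹) = D^{1/2} (I + (D₁^{-1/2}K₁D₁^{-1/2})⁻¹ ⊗ (D₂^{-1/2}K₂D₂^{-1/2})) (D^{1/2})⁻¹`,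
and, if `K₁ ⊗ D₂` and `(K₁ ⊗ D₂) + (D₁ ⊗ K₂)` are invertible, then
`(K₁ ⊗ D₂)((K₁ ⊗ D₂) + (D₁ ⊗ K₂))⁻¹ = (I + (D₁K₁⁻¹) ⊗ (K₂D₂⁻¹))⁻¹`
whenever the latter inverse exists. -/
theorem kronecker_similarity_identities
    (N M : ℕ) (hN : 1 ≤ N) (hM : 1 ≤ M)
    (d₁ : Fin N → ℝ) (hd₁ : ∀ i, 0 < d₁ i)
    (d₂ : Fin M → ℝ) (hd₂ : ∀ j, 0 < d₂ j)
    (K₁ : Matrix (Fin N) (Fin N) ℝ) (hK₁ : IsUnit K₁)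
    (K₂ : Matrix (Fin M) (Fin M) ℝ)
    (D₁ : Matrix (Fin N) (Fin N) ℝ) (hD₁ : D₁ = Matrix.diagonal d₁)
    (D₂ : Matrix (Fin M) (Fin M) ℝ) (hD₂ : D₂ = Matrix.diagonal d₂)
    (D₁h : Matrix (Fin N) (Fin N) ℝ) (hD₁h : D₁h = Matrix.diagonal fun i => Real.sqrt (d₁ i))
    (D₂h : Matrix (Fin M) (Fin M) ℝ) (hD₂h : D₂h = Matrix.diagonal fun j => Real.sqrt (d₂ j))
    (D₁mh : Matrix (Fin N) (Fin N) ℝ)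
    (hD₁mh : D₁mh = Matrix.diagonal fun i => (Real.sqrt (d₁ i))⁻¹)
    (D₂mh : Matrix (Fin M) (Fin M) ℝ)
    (hD₂mh : D₂mh = Matrix.diagonal fun j => (Real.sqrt (d₂ j))⁻¹)
    (Dh : Matrix (Fin N × Fin M) (Fin N × Fin M) ℝ) (hDh : Dh = D₁h ⊗ₖ D₂h) :
    (1 : Matrix (Fin N × Fin M) (Fin N × Fin M) ℝ) + (D₁ * K₁⁻¹) ⊗ₖ (K₂ * D₂⁻¹) =
        Dh * (1 + (D₁mh * K₁ * D₁mh)⁻¹ ⊗ₖ (D₂mh * K₂ * D₂mh)) * Dh⁻¹ ∧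
      (IsUnit (K₁ ⊗ₖ D₂) → IsUnit (K₁ ⊗ₖ D₂ + D₁ ⊗ₖ K₂) →
        IsUnit ((1 : Matrix (Fin N × Fin M) (Fin N × Fin M) ℝ) +
          (D₁ * K₁⁻¹) ⊗ₖ (K₂ * D₂⁻¹)) →
        (K₁ ⊗ₖ D₂) * (K₁ ⊗ₖ D₂ + D₁ ⊗ₖ K₂)⁻¹ =
          ((1 : Matrix (Fin N × Fin M) (Fin N × Fin M) ℝ) +
            (D₁ * K₁⁻¹) ⊗ₖ (K₂ * D₂⁻¹))⁻¹) := by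
  have hs₁ : ∀ i, Real.sqrt (d₁ i) ≠ 0 := fun i =>
    ne_of_gt (Real.sqrt_pos.mpr (hd₁ i))
  have hs₂ : ∀ j, Real.sqrt (d₂ j) ≠ 0 := fun j =>
    ne_of_gt (Real.sqrt_pos.mpr (hd₂ j))
  -- basic diagonal products
  have h1h : D₁h * D₁mh = 1 := by
    rw [hD₁h, hD₁mh, Matrix.diagonal_mul_diagonal]
    simp [mul_inv_cancel₀, hs₁, Matrix.diagonal_one]
  have h1h' : D₁mh * D₁h = 1 := by
    rw [hD₁h, hD₁mh, Matrix.diagonal_mul_diagonal]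
    simp [inv_mul_cancel₀, hs₁, Matrix.diagonal_one]
  have h2h : D₂h * D₂mh = 1 := by
    rw [hD₂h, hD₂mh, Matrix.diagonal_mul_diagonal]
    simp [mul_inv_cancel₀, hs₂, Matrix.diagonal_one]
  have h2h' : D₂mh * D₂h = 1 := by
    rw [hD₂h, hD₂mh, Matrix.diagonal_mul_diagonal]
    simp [inv_mul_cancel₀, hs₂, Matrix.diagonal_one]
  have hsq₁ : D₁h * D₁h = D₁ := by
    rw [hD₁h, hD₁, Matrix.diagonal_mul_diagonal]
    have : (fun i => Real.sqrt (d₁ i) * Real.sqrt (d₁ i)) = d₁ :=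
      funext fun i => Real.mul_self_sqrt (hd₁ i).le
    rw [this]
  have hsq₂m : D₂mh * D₂mh = D₂⁻¹ := by
    have : D₂ * (D₂mh * D₂mh) = 1 := by
      rw [hD₂, hD₂mh, Matrix.diagonal_mul_diagonal, Matrix.diagonal_mul_diagonal]
      have : ∀ j, d₂ j * ((Real.sqrt (d₂ j))⁻¹ * (Real.sqrt (d₂ j))⁻¹) = 1 := by
        intro j
        rw [← mul_inv]
        rw [Real.mul_self_sqrt (hd₂ j).le]
        exact mul_inv_cancel₀ (ne_of_gt (hd₂ j))
      simp only [this]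
      exact Matrix.diagonal_one
    exact (Matrix.inv_eq_right_inv this).symm
  have hK₁det : IsUnit K₁.det := (Matrix.isUnit_iff_isUnit_det K₁).mp hK₁
  have hKK : K₁ * K₁⁻¹ = 1 := Matrix.mul_nonsing_inv _ hK₁det
  -- inverse of the symmetrized middle block
  have hAinv : (D₁mh * K₁ * D₁mh)⁻¹ = D₁h * K₁⁻¹ * D₁h := by
    apply Matrix.inv_eq_right_inv
    calc D₁mh * K₁ * D₁mh * (D₁h * K₁⁻¹ * D₁h)
        = D₁mh * (K₁ * ((D₁mh * D₁h) * (K₁⁻¹ * D₁h))) := by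
          simp only [mul_assoc]
      _ = D₁mh * (K₁ * K₁⁻¹ * D₁h) := by rw [h1h', one_mul, mul_assoc]
      _ = 1 := by rw [hKK, one_mul, h1h']
  -- inverse of Dh
  have hDhinv : Dh⁻¹ = D₁mh ⊗ₖ D₂mh := by
    apply Matrix.inv_eq_right_inv
    rw [hDh, ← Matrix.mul_kronecker_mul, h1h, h2h, Matrix.one_kronecker_one]
  constructor
  · -- similarity identity
    rw [hDhinv, hDh, hAinv, mul_add, add_mul, mul_one,
      ← Matrix.mul_kronecker_mul, ← Matrix.mul_kronecker_mul,
      ← Matrix.mul_kronecker_mul, h1h, h2h, Matrix.one_kronecker_one]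
    have e1 : D₁h * (D₁h * K₁⁻¹ * D₁h) * D₁mh = D₁ * K₁⁻¹ := by
      calc D₁h * (D₁h * K₁⁻¹ * D₁h) * D₁mh
          = D₁h * (D₁h * (K₁⁻¹ * (D₁h * D₁mh))) := by simp only [mul_assoc]
        _ = D₁h * D₁h * K₁⁻¹ := by rw [h1h, mul_one, mul_assoc]
        _ = D₁ * K₁⁻¹ := by rw [hsq₁]
    have e2 : D₂h * (D₂mh * K₂ * D₂mh) * D₂mh = K₂ * D₂⁻¹ := by
      calc D₂h * (D₂mh * K₂ * D₂mh) * D₂mh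
          = D₂h * D₂mh * (K₂ * (D₂mh * D₂mh)) := by simp only [mul_assoc]
        _ = K₂ * D₂⁻¹ := by rw [h2h, hsq₂m, one_mul]
    rw [e1, e2]
  · -- resolvent identity
    intro hS hST _
    have hSdet : IsUnit (K₁ ⊗ₖ D₂).det := (Matrix.isUnit_iff_isUnit_det _).mp hS
    have hSS : (K₁ ⊗ₖ D₂) * (K₁ ⊗ₖ D₂)⁻¹ = 1 := Matrix.mul_nonsing_inv _ hSdet
    have hkey : (K₁ ⊗ₖ D₂ + D₁ ⊗ₖ K₂) * (K₁ ⊗ₖ D₂)⁻¹ =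
        1 + (D₁ * K₁⁻¹) ⊗ₖ (K₂ * D₂⁻¹) := by
      rw [add_mul, hSS, Matrix.inv_kronecker, ← Matrix.mul_kronecker_mul]
    calc (K₁ ⊗ₖ D₂) * (K₁ ⊗ₖ D₂ + D₁ ⊗ₖ K₂)⁻¹
        = (K₁ ⊗ₖ D₂)⁻¹⁻¹ * (K₁ ⊗ₖ D₂ + D₁ ⊗ₖ K₂)⁻¹ := by
          rw [Matrix.nonsing_inv_nonsing_inv _ hSdet]
      _ = ((K₁ ⊗ₖ D₂ + D₁ ⊗ₖ K₂) * (K₁ ⊗ₖ D₂)⁻¹)⁻¹ := by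
          rw [Matrix.mul_inv_rev]
      _ = _ := by rw [hkey]
end

section
/- Let a, b, c, d ∈ ℝ and define the bilinear function v : [0,1]² → ℝ by v(x, y) = a(1−x)(1−y) + b x(1−y) + c (1−x)y + d xy. Then (1/36)(a² + b² + c² + d²) ≤ ∫₀¹∫₀¹ v(x,y)² dx dy ≤ (1/4)(a² + b² + c² + d²). In particular, since the trapezoidal quadrature value of v² on the unit square equals (1/4)(a² + b² + c² + d²), the quadrature norm and the L² norm are uniformly equivalent on each bilinear finite element. -/
private lemma intpoly (p0 p1 p2 : ℝ) :
    ∫ x in (0:ℝ)..1, (p0 + p1 * x + p2 * x ^ 2) = p0 + p1 / 2 + p2 / 3 := by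
  have h : ∀ x ∈ Set.uIcc (0:ℝ) 1,
      HasDerivAt (fun x : ℝ => p0 * x + p1 * x ^ 2 / 2 + p2 * x ^ 3 / 3)
        (p0 + p1 * x + p2 * x ^ 2) x := by
    intro x _
    have h1 : HasDerivAt (fun x : ℝ => p0 * x) p0 x := by
      simpa using (hasDerivAt_id x).const_mul p0
    have h2 : HasDerivAt (fun x : ℝ => p1 * x ^ 2 / 2) (p1 * x) x := by
      have h' := ((hasDerivAt_pow 2 x).const_mul p1).div_const 2
      exact h'.congr_deriv (by push_cast; ring)
    have h3 : HasDerivAt (fun x : ℝ => p2 * x ^ 3 / 3) (p2 * x ^ 2) x := by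
      have := (hasDerivAt_pow 3 x).const_mul p2
      have h' := this.div_const 3
      exact h'.congr_deriv (by push_cast; ring)
    exact (h1.add h2).add h3
  rw [intervalIntegral.integral_eq_sub_of_hasDerivAt h
    (Continuous.intervalIntegrable (by continuity) _ _)]
  ring

/-- For the bilinear function
`v(x,y) = a(1-x)(1-y) + bx(1-y) + c(1-x)y + dxy` on the unit square,
`(1/36)(a² + b² + c² + d²) ≤ ∫₀¹∫₀¹ v² ≤ (1/4)(a² + b² + c² + d²)`, and the
trapezoidal quadrature value of `v²` on the unit square equals
`(1/4)(a² + b² + c² + d²)`: the quadrature norm and the `L²` norm are uniformly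
equivalent on each bilinear finite element. -/
theorem bilinear_element_norm_equivalence
    (a b c d : ℝ) (v : ℝ → ℝ → ℝ)
    (hv : ∀ x y : ℝ,
      v x y = a * (1 - x) * (1 - y) + b * x * (1 - y) + c * (1 - x) * y + d * x * y) :
    (1 / 36) * (a ^ 2 + b ^ 2 + c ^ 2 + d ^ 2) ≤
        (∫ x in (0:ℝ)..1, ∫ y in (0:ℝ)..1, (v x y) ^ 2) ∧
      (∫ x in (0:ℝ)..1, ∫ y in (0:ℝ)..1, (v x y) ^ 2) ≤
        (1 / 4) * (a ^ 2 + b ^ 2 + c ^ 2 + d ^ 2) ∧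
      (1 / 4) * ((v 0 0) ^ 2 + (v 1 0) ^ 2 + (v 0 1) ^ 2 + (v 1 1) ^ 2) =
        (1 / 4) * (a ^ 2 + b ^ 2 + c ^ 2 + d ^ 2) := by
  have inner : ∀ x : ℝ, (∫ y in (0:ℝ)..1, (v x y) ^ 2) =
      ((a * (1 - x) + b * x) ^ 2
        + (a * (1 - x) + b * x) * ((c - a) * (1 - x) + (d - b) * x)
        + ((c - a) * (1 - x) + (d - b) * x) ^ 2 / 3) := by
    intro x
    have e : ∀ y : ℝ, (v x y) ^ 2 =
        (a * (1 - x) + b * x) ^ 2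
          + (2 * (a * (1 - x) + b * x) * ((c - a) * (1 - x) + (d - b) * x)) * y
          + ((c - a) * (1 - x) + (d - b) * x) ^ 2 * y ^ 2 := by
      intro y; rw [hv]; ring
    simp only [e]
    rw [intpoly]
    ring
  have outer : (∫ x in (0:ℝ)..1, ∫ y in (0:ℝ)..1, (v x y) ^ 2) =
      (a ^ 2 + a * (c - a) + (c - a) ^ 2 / 3)
        + (2 * a * (b - a) + a * (a - b - c + d) + (b - a) * (c - a)
            + 2 * (c - a) * (a - b - c + d) / 3) / 2
        + ((b - a) ^ 2 + (b - a) * (a - b - c + d) + (a - b - c + d) ^ 2 / 3) / 3 := by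
    have e : ∀ x : ℝ, (∫ y in (0:ℝ)..1, (v x y) ^ 2) =
        (a ^ 2 + a * (c - a) + (c - a) ^ 2 / 3)
          + (2 * a * (b - a) + a * (a - b - c + d) + (b - a) * (c - a)
              + 2 * (c - a) * (a - b - c + d) / 3) * x
          + ((b - a) ^ 2 + (b - a) * (a - b - c + d) + (a - b - c + d) ^ 2 / 3) * x ^ 2 := by
      intro x; rw [inner x]; ring
    simp only [e]
    rw [intpoly]
  rw [outer]
  refine ⟨by nlinarith [sq_nonneg (a + b + c + d), sq_nonneg (a - d), sq_nonneg (b - c)],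
    by nlinarith [sq_nonneg (a - b), sq_nonneg (a - c), sq_nonneg (b - d), sq_nonneg (c - d),
      sq_nonneg (a - d), sq_nonneg (b - c)], ?_⟩
  simp only [hv]; ring
end
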